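/- arXiv:1404.5881 — 2 statements merged into one kernel-verified Lean document; each statement's English description precedes it below -/
import Mathlib

section
/- Let H be a finite-dimensional complex Hilbert space of dimension at least 3. There is no map v from self-adjoint operators on H to real numbers such that v(A) is always an eigenvalue of A and v(A+B) = v(A) + v(B) and v(AB) = v(A)v(B) whenever A and B commute. (Kochen–Specker via valuations.) -/
open scoped ComplexInnerProductSpace
set_option linter.unusedSectionVars false
set_option linter.unnecessarySeqFocus false
set_option linter.unreachableTactic false
set_option linter.unusedTactic false
set_option maxHeartbeats 1000000
noncomputable section
namespace KS12
variable {H : Type*} [NormedAddCommGroup H] [InnerProductSpace ℂ H] [FiniteDimensional ℂ H]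



def projOp (x : H) : H →L[ℂ] H := (innerSL ℂ x).smulRight x

lemma projOp_apply (x y : H) : projOp x y = ⟪x, y⟫ • x := rfl

lemma projOp_sa (x : H) : IsSelfAdjoint (projOp x) := by
  rw [ContinuousLinearMap.isSelfAdjoint_iff_isSymmetric]
  intro y z
  simp only [ContinuousLinearMap.coe_coe, projOp_apply, inner_smul_left, inner_smul_right, inner_conj_symm]
  ring

lemma projOp_mul (x y : H) (h : ⟪x, y⟫ = 0) : projOp x * projOp y = 0 := by
  ext z
  simp [ContinuousLinearMap.mul_apply, projOp_apply, inner_smul_right, h]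

lemma projOp_idem (x : H) (h : ‖x‖ = 1) : projOp x * projOp x = projOp x := by
  ext z
  simp [ContinuousLinearMap.mul_apply, projOp_apply, inner_smul_right,
    inner_self_eq_norm_sq_to_K, h]

lemma sum_projOp {ι : Type*} [Fintype ι] (b : OrthonormalBasis ι ℂ H) :
    ∑ i, projOp (b i) = 1 := by
  ext y
  simp only [ContinuousLinearMap.sum_apply, projOp_apply, ContinuousLinearMap.one_apply]
  exact b.sum_repr' y




def dot (a b : Fin 3 → ℝ) : ℝ := a 0 * b 0 + a 1 * b 1 + a 2 * b 2

def vecE (e : Fin 3 → H) (a : Fin 3 → ℝ) : H := ∑ s, (a s : ℂ) • e s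

def nvec (e : Fin 3 → H) (a : Fin 3 → ℝ) : H := ((‖vecE e a‖ : ℂ))⁻¹ • vecE e a

lemma inner_vecE (e : Fin 3 → H) (he : Orthonormal ℂ e) (a c : Fin 3 → ℝ) :
    ⟪vecE e a, vecE e c⟫ = ((dot a c : ℝ) : ℂ) := by
  classical
  unfold vecE
  rw [sum_inner]
  simp only [inner_sum, inner_smul_left, inner_smul_right, orthonormal_iff_ite.mp he]
  simp [Finset.mul_sum, Finset.sum_ite_eq, Fin.sum_univ_three, dot]
  push_cast
  ring

lemma vecE_ne (e : Fin 3 → H) (he : Orthonormal ℂ e) (a : Fin 3 → ℝ) (ha : dot a a ≠ 0) :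
    vecE e a ≠ 0 := by
  intro h
  apply ha
  have h2 := inner_vecE e he a a
  rw [h, inner_zero_left] at h2
  exact_mod_cast h2.symm

lemma norm_nvec (e : Fin 3 → H) (he : Orthonormal ℂ e) (a : Fin 3 → ℝ) (ha : dot a a ≠ 0) :
    ‖nvec e a‖ = 1 := by
  have h := vecE_ne e he a ha
  rw [nvec, norm_smul, norm_inv, Complex.norm_real, Real.norm_eq_abs,
    abs_of_nonneg (norm_nonneg _), inv_mul_cancel₀ (norm_ne_zero_iff.mpr h)]

lemma inner_nvec (e : Fin 3 → H) (he : Orthonormal ℂ e) (a c : Fin 3 → ℝ) :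
    ⟪nvec e a, nvec e c⟫ = ((‖vecE e a‖:ℂ))⁻¹ * ((‖vecE e c‖:ℂ))⁻¹ * ((dot a c : ℝ) : ℂ) := by
  rw [nvec, nvec, inner_smul_left, inner_smul_right, inner_vecE e he]
  simp [map_inv₀, Complex.conj_ofReal]
  ring

lemma inner_nvec_zero (e : Fin 3 → H) (he : Orthonormal ℂ e) (a c : Fin 3 → ℝ)
    (h : dot a c = 0) : ⟪nvec e a, nvec e c⟫ = 0 := by
  rw [inner_nvec e he, h]
  simp

lemma inner_nvec_self (e : Fin 3 → H) (he : Orthonormal ℂ e) (a : Fin 3 → ℝ)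
    (ha : dot a a ≠ 0) : ⟪nvec e a, nvec e a⟫ = 1 := by
  rw [inner_self_eq_norm_sq_to_K, norm_nvec e he a ha]
  norm_num

lemma inner_nvec_right (e : Fin 3 → H) (a : Fin 3 → ℝ) (w : H)
    (h : ∀ s, ⟪e s, w⟫ = 0) : ⟪nvec e a, w⟫ = 0 := by
  rw [nvec, inner_smul_left, vecE, sum_inner]
  have hs : ∑ i : Fin 3, ⟪(a i : ℂ) • e i, w⟫ = 0 :=
    Finset.sum_eq_zero (fun s _ => by rw [inner_smul_left, h s, mul_zero])
  rw [hs, mul_zero]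

section V
variable (v : (H →L[ℂ] H) → ℝ)
  (heig : ∀ A : H →L[ℂ] H, IsSelfAdjoint A →
        Module.End.HasEigenvalue (A.toLinearMap) ((v A : ℝ) : ℂ))
  (hops : ∀ A B : H →L[ℂ] H, IsSelfAdjoint A → IsSelfAdjoint B → A * B = B * A →
        v (A + B) = v A + v B ∧ v (A * B) = v A * v B)

include heig in
lemma v_one : v 1 = 1 := by
  obtain ⟨x, hx⟩ := (heig 1 (IsSelfAdjoint.one _)).exists_hasEigenvector
  have h1 : x = ((v 1 : ℝ) : ℂ) • x := by simpa using hx.apply_eq_smul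
  have hx0 : x ≠ 0 := hx.2
  have h2 : (((v 1 : ℝ) : ℂ) - 1) • x = 0 := by
    rw [sub_smul, one_smul, ← h1, sub_self]
  rcases smul_eq_zero.mp h2 with h | h
  · have : ((v 1 : ℝ) : ℂ) = 1 := by linear_combination h
    exact_mod_cast this
  · exact absurd h hx0

include hops in
lemma v_zero : v 0 = 0 := by
  have h := (hops 0 0 (by simp [IsSelfAdjoint]) (by simp [IsSelfAdjoint]) (by simp)).1
  simp only [add_zero] at h
  linarith

include hops in
lemma v_proj01 (x : H) (h : ‖x‖ = 1) : v (projOp x) = 0 ∨ v (projOp x) = 1 := by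
  have h2 := (hops (projOp x) (projOp x) (projOp_sa x) (projOp_sa x) rfl).2
  rw [projOp_idem x h] at h2
  rcases mul_eq_zero.mp (show v (projOp x) * (v (projOp x) - 1) = 0 by nlinarith [h2]) with h'|h'
  · exact Or.inl h'
  · exact Or.inr (by linarith)

include hops in
lemma v_sum {ι : Type*} [DecidableEq ι] (x : ι → H) (s : Finset ι)
    (horth : ∀ i ∈ s, ∀ j ∈ s, i ≠ j → ⟪x i, x j⟫ = 0) :
    v (∑ i ∈ s, projOp (x i)) = ∑ i ∈ s, v (projOp (x i)) := by
  induction s using Finset.cons_induction with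
  | empty => simpa using v_zero v hops
  | cons a s ha ih =>
    have hsa : IsSelfAdjoint (∑ i ∈ s, projOp (x i)) := by
      rw [IsSelfAdjoint, star_sum]
      exact Finset.sum_congr rfl fun i _ => projOp_sa (x i)
    have hcomm : projOp (x a) * (∑ i ∈ s, projOp (x i)) = (∑ i ∈ s, projOp (x i)) * projOp (x a) := by
      rw [Finset.mul_sum, Finset.sum_mul]
      refine Finset.sum_congr rfl fun i hi => ?_
      have hne : a ≠ i := fun h => ha (h ▸ hi)
      rw [projOp_mul _ _ (horth a (Finset.mem_cons_self a s) i (Finset.mem_cons_of_mem hi) hne),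
        projOp_mul _ _ (horth i (Finset.mem_cons_of_mem hi) a (Finset.mem_cons_self a s) hne.symm)]
    rw [Finset.sum_cons, Finset.sum_cons,
      (hops _ _ (projOp_sa (x a)) hsa hcomm).1,
      ih (fun i hi j hj hij => horth i (Finset.mem_cons_of_mem hi) j (Finset.mem_cons_of_mem hj) hij)]
end V

lemma triple_sum {ι : Type*} [Fintype ι] [DecidableEq ι]
    (v : (H →L[ℂ] H) → ℝ)
    (hops : ∀ A B : H →L[ℂ] H, IsSelfAdjoint A → IsSelfAdjoint B → A * B = B * A →
        v (A + B) = v A + v B ∧ v (A * B) = v A * v B)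
    (hv1 : v 1 = 1)
    (b : OrthonormalBasis ι ℂ H) (i₀ j k : ι)
    (hij : i₀ ≠ j) (hik : i₀ ≠ k) (hjk : j ≠ k)
    (hcard : Fintype.card ι = Module.finrank ℂ H)
    (h0 : ∀ i : ι, i ≠ i₀ → v (projOp (b i)) = 0)
    (a₁ a₂ a₃ : Fin 3 → ℝ)
    (ha1 : dot a₁ a₁ ≠ 0) (ha2 : dot a₂ a₂ ≠ 0) (ha3 : dot a₃ a₃ ≠ 0)
    (h12 : dot a₁ a₂ = 0) (h13 : dot a₁ a₃ = 0) (h23 : dot a₂ a₃ = 0) :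
    v (projOp (nvec ![b i₀, b j, b k] a₁)) + v (projOp (nvec ![b i₀, b j, b k] a₂)) +
      v (projOp (nvec ![b i₀, b j, b k] a₃)) = 1 := by
  have hb := orthonormal_iff_ite.mp b.orthonormal
  set e : Fin 3 → H := ![b i₀, b j, b k] with he_def
  have he : Orthonormal ℂ e := by
    rw [orthonormal_iff_ite]
    intro s t
    fin_cases s <;> fin_cases t <;>
      simp [he_def, hb, hij, hik, hjk, hij.symm, hik.symm, hjk.symm]
  have heb : ∀ i : ι, i ≠ i₀ → i ≠ j → i ≠ k → ∀ s : Fin 3, ⟪e s, b i⟫ = 0 := by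
    intro i hi0 hij' hik' s
    fin_cases s <;> simp [he_def, hb, (Ne.symm hi0), (Ne.symm hij'), (Ne.symm hik')] <;>
      tauto
  have hdot21 : dot a₂ a₁ = 0 := by unfold dot at *; linarith [h12]
  have hdot31 : dot a₃ a₁ = 0 := by unfold dot at *; linarith [h13]
  have hdot32 : dot a₃ a₂ = 0 := by unfold dot at *; linarith [h23]
  set A : Fin 3 → (Fin 3 → ℝ) := ![a₁, a₂, a₃] with hA_def
  let T := {i : ι // i ≠ i₀ ∧ i ≠ j ∧ i ≠ k}
  set y : (Fin 3 ⊕ T) → H := Sum.elim (fun s => nvec e (A s)) (fun t => b t.1) with hy_def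
  have hy : Orthonormal ℂ y := by
    rw [orthonormal_iff_ite]
    rintro (s | t) (s' | t')
    · simp only [hy_def, Sum.elim_inl, Sum.inl.injEq]
      fin_cases s <;> fin_cases s' <;>
        simp [hA_def, inner_nvec_self e he _ ha1, inner_nvec_self e he _ ha2,
          inner_nvec_self e he _ ha3, norm_nvec e he _ ha1, norm_nvec e he _ ha2, norm_nvec e he _ ha3,
          inner_nvec_zero e he _ _ h12, inner_nvec_zero e he _ _ h13,
          inner_nvec_zero e he _ _ h23, inner_nvec_zero e he _ _ hdot21,
          inner_nvec_zero e he _ _ hdot31, inner_nvec_zero e he _ _ hdot32]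
    · simp only [hy_def, Sum.elim_inl, Sum.elim_inr]
      rw [inner_nvec_right e _ _ (heb t'.1 t'.2.1 t'.2.2.1 t'.2.2.2)]
      simp
    · simp only [hy_def, Sum.elim_inl, Sum.elim_inr]
      rw [← inner_conj_symm, inner_nvec_right e _ _ (heb t.1 t.2.1 t.2.2.1 t.2.2.2)]
      simp
    · simp only [hy_def, Sum.elim_inr, Sum.inr.injEq, hb, Subtype.coe_inj]
  have hcT : ({i₀, j, k} : Finset ι).card = 3 := by
    rw [Finset.card_insert_of_notMem (by simp [hij, hik]),
      Finset.card_insert_of_notMem (by simp [hjk]), Finset.card_singleton]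
  have hcardT : Fintype.card T = Fintype.card ι - 3 := by
    have h1 : (Finset.univ.filter fun i : ι => i ≠ i₀ ∧ i ≠ j ∧ i ≠ k) =
        Finset.univ \ {i₀, j, k} := by
      ext i; simp [not_or, and_assoc]
    rw [Fintype.card_subtype, h1, Finset.card_sdiff_of_subset (Finset.subset_univ _), hcT,
      Finset.card_univ]
  have hc3 : 3 ≤ Fintype.card ι := by
    calc 3 = ({i₀, j, k} : Finset ι).card := hcT.symm
    _ ≤ Fintype.card ι := Finset.card_le_univ _
  have hycard : Fintype.card (Fin 3 ⊕ T) = Module.finrank ℂ H := by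
    rw [Fintype.card_sum, Fintype.card_fin, hcardT, ← hcard]
    omega
  have hspan := hy.linearIndependent.span_eq_top_of_card_eq_finrank hycard
  let B : OrthonormalBasis (Fin 3 ⊕ T) ℂ H := OrthonormalBasis.mk hy hspan.ge
  have hBy : ∀ t, B t = y t := fun t => by
    rw [show B = OrthonormalBasis.mk hy hspan.ge from rfl, OrthonormalBasis.coe_mk]
  have hsum1 : v (∑ t, projOp (B t)) = 1 := by rw [sum_projOp B, hv1]
  have horth : ∀ i ∈ (Finset.univ : Finset (Fin 3 ⊕ T)), ∀ j ∈ Finset.univ, i ≠ j →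
      ⟪B i, B j⟫ = 0 := by
    intro i _ j _ hijne
    have := orthonormal_iff_ite.mp hy i j
    rw [hBy, hBy, this, if_neg hijne]
  have hvs := v_sum v hops (fun t => B t) Finset.univ horth
  rw [hsum1] at hvs
  have hsplit : ∑ t : Fin 3 ⊕ T, v (projOp (B t)) =
      (∑ s : Fin 3, v (projOp (nvec e (A s)))) + ∑ t : T, v (projOp (b t.1)) := by
    rw [Fintype.sum_sum_type]
    congr 1
    · exact Finset.sum_congr rfl fun s _ => by rw [hBy]; simp [hy_def]
    · exact Finset.sum_congr rfl fun t _ => by rw [hBy]; simp [hy_def]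
  have hz : ∑ t : T, v (projOp (b t.1)) = 0 :=
    Finset.sum_eq_zero fun t _ => h0 t.1 t.2.1
  rw [hsplit, hz, add_zero, Fin.sum_univ_three] at hvs
  simpa [hA_def] using hvs.symm

attribute [local simp] Matrix.cons_val_two

lemma KS_core (g : (Fin 3 → ℝ) → ℝ)
    (h01 : ∀ a : Fin 3 → ℝ, dot a a ≠ 0 → g a = 0 ∨ g a = 1)
    (ht : ∀ a b c : Fin 3 → ℝ, dot a a ≠ 0 → dot b b ≠ 0 → dot c c ≠ 0 →
      dot a b = 0 → dot a c = 0 → dot b c = 0 → g a + g b + g c = 1) :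
    False := by
  have T0 := ht ![(0:ℝ),0,1] ![(0:ℝ),1,0] ![(1:ℝ),0,0] (by norm_num [dot]) (by norm_num [dot]) (by norm_num [dot]) (by norm_num [dot]) (by norm_num [dot]) (by norm_num [dot])
  have T1 := ht ![(0:ℝ),0,1] ![(1:ℝ),-1,0] ![(1:ℝ),1,0] (by norm_num [dot]) (by norm_num [dot]) (by norm_num [dot]) (by norm_num [dot]) (by norm_num [dot]) (by norm_num [dot])
  have T2 := ht ![(0:ℝ),1,-2] ![(0:ℝ),2,1] ![(1:ℝ),0,0] (by norm_num [dot]) (by norm_num [dot]) (by norm_num [dot]) (by norm_num [dot]) (by norm_num [dot]) (by norm_num [dot])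
  have T3 := ht ![(0:ℝ),1,-2] ![(1:ℝ),-2,-1] ![(5:ℝ),2,1] (by norm_num [dot]) (by norm_num [dot]) (by norm_num [dot]) (by norm_num [dot]) (by norm_num [dot]) (by norm_num [dot])
  have T4 := ht ![(0:ℝ),1,-2] ![(1:ℝ),2,1] ![(5:ℝ),-2,-1] (by norm_num [dot]) (by norm_num [dot]) (by norm_num [dot]) (by norm_num [dot]) (by norm_num [dot]) (by norm_num [dot])
  have T5 := ht ![(0:ℝ),1,-1] ![(0:ℝ),1,1] ![(1:ℝ),0,0] (by norm_num [dot]) (by norm_num [dot]) (by norm_num [dot]) (by norm_num [dot]) (by norm_num [dot]) (by norm_num [dot])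
  have T6 := ht ![(0:ℝ),1,-1] ![(1:ℝ),-1,-1] ![(2:ℝ),1,1] (by norm_num [dot]) (by norm_num [dot]) (by norm_num [dot]) (by norm_num [dot]) (by norm_num [dot]) (by norm_num [dot])
  have T7 := ht ![(0:ℝ),1,-1] ![(1:ℝ),1,1] ![(2:ℝ),-1,-1] (by norm_num [dot]) (by norm_num [dot]) (by norm_num [dot]) (by norm_num [dot]) (by norm_num [dot]) (by norm_num [dot])
  have T8 := ht ![(0:ℝ),1,0] ![(1:ℝ),0,-2] ![(2:ℝ),0,1] (by norm_num [dot]) (by norm_num [dot]) (by norm_num [dot]) (by norm_num [dot]) (by norm_num [dot]) (by norm_num [dot])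
  have T9 := ht ![(0:ℝ),1,0] ![(1:ℝ),0,-1] ![(1:ℝ),0,1] (by norm_num [dot]) (by norm_num [dot]) (by norm_num [dot]) (by norm_num [dot]) (by norm_num [dot]) (by norm_num [dot])
  have T10 := ht ![(0:ℝ),1,0] ![(1:ℝ),0,2] ![(2:ℝ),0,-1] (by norm_num [dot]) (by norm_num [dot]) (by norm_num [dot]) (by norm_num [dot]) (by norm_num [dot]) (by norm_num [dot])
  have T11 := ht ![(0:ℝ),1,1] ![(1:ℝ),-1,1] ![(2:ℝ),1,-1] (by norm_num [dot]) (by norm_num [dot]) (by norm_num [dot]) (by norm_num [dot]) (by norm_num [dot]) (by norm_num [dot])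
  have T12 := ht ![(0:ℝ),1,1] ![(1:ℝ),1,-1] ![(2:ℝ),-1,1] (by norm_num [dot]) (by norm_num [dot]) (by norm_num [dot]) (by norm_num [dot]) (by norm_num [dot]) (by norm_num [dot])
  have T13 := ht ![(0:ℝ),1,2] ![(0:ℝ),2,-1] ![(1:ℝ),0,0] (by norm_num [dot]) (by norm_num [dot]) (by norm_num [dot]) (by norm_num [dot]) (by norm_num [dot]) (by norm_num [dot])
  have T14 := ht ![(0:ℝ),1,2] ![(1:ℝ),-2,1] ![(5:ℝ),2,-1] (by norm_num [dot]) (by norm_num [dot]) (by norm_num [dot]) (by norm_num [dot]) (by norm_num [dot]) (by norm_num [dot])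
  have T15 := ht ![(0:ℝ),1,2] ![(1:ℝ),2,-1] ![(5:ℝ),-2,1] (by norm_num [dot]) (by norm_num [dot]) (by norm_num [dot]) (by norm_num [dot]) (by norm_num [dot]) (by norm_num [dot])
  have T16 := ht ![(0:ℝ),2,-1] ![(1:ℝ),-1,-2] ![(5:ℝ),1,2] (by norm_num [dot]) (by norm_num [dot]) (by norm_num [dot]) (by norm_num [dot]) (by norm_num [dot]) (by norm_num [dot])
  have T17 := ht ![(0:ℝ),2,-1] ![(1:ℝ),1,2] ![(5:ℝ),-1,-2] (by norm_num [dot]) (by norm_num [dot]) (by norm_num [dot]) (by norm_num [dot]) (by norm_num [dot]) (by norm_num [dot])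
  have T18 := ht ![(0:ℝ),2,1] ![(1:ℝ),-1,2] ![(5:ℝ),1,-2] (by norm_num [dot]) (by norm_num [dot]) (by norm_num [dot]) (by norm_num [dot]) (by norm_num [dot]) (by norm_num [dot])
  have T19 := ht ![(0:ℝ),2,1] ![(1:ℝ),1,-2] ![(5:ℝ),-1,2] (by norm_num [dot]) (by norm_num [dot]) (by norm_num [dot]) (by norm_num [dot]) (by norm_num [dot]) (by norm_num [dot])
  have T20 := ht ![(1:ℝ),-4,-1] ![(1:ℝ),0,1] ![(2:ℝ),1,-2] (by norm_num [dot]) (by norm_num [dot]) (by norm_num [dot]) (by norm_num [dot]) (by norm_num [dot]) (by norm_num [dot])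
  have T21 := ht ![(1:ℝ),-4,1] ![(1:ℝ),0,-1] ![(2:ℝ),1,2] (by norm_num [dot]) (by norm_num [dot]) (by norm_num [dot]) (by norm_num [dot]) (by norm_num [dot]) (by norm_num [dot])
  have T22 := ht ![(1:ℝ),-2,-1] ![(1:ℝ),0,1] ![(1:ℝ),1,-1] (by norm_num [dot]) (by norm_num [dot]) (by norm_num [dot]) (by norm_num [dot]) (by norm_num [dot]) (by norm_num [dot])
  have T23 := ht ![(1:ℝ),-2,1] ![(1:ℝ),0,-1] ![(1:ℝ),1,1] (by norm_num [dot]) (by norm_num [dot]) (by norm_num [dot]) (by norm_num [dot]) (by norm_num [dot]) (by norm_num [dot])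
  have T24 := ht ![(1:ℝ),-1,-4] ![(1:ℝ),1,0] ![(2:ℝ),-2,1] (by norm_num [dot]) (by norm_num [dot]) (by norm_num [dot]) (by norm_num [dot]) (by norm_num [dot]) (by norm_num [dot])
  have T25 := ht ![(1:ℝ),-1,-2] ![(1:ℝ),-1,1] ![(1:ℝ),1,0] (by norm_num [dot]) (by norm_num [dot]) (by norm_num [dot]) (by norm_num [dot]) (by norm_num [dot]) (by norm_num [dot])
  have T26 := ht ![(1:ℝ),-1,-2] ![(1:ℝ),5,-2] ![(2:ℝ),0,1] (by norm_num [dot]) (by norm_num [dot]) (by norm_num [dot]) (by norm_num [dot]) (by norm_num [dot]) (by norm_num [dot])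
  have T27 := ht ![(1:ℝ),-1,-1] ![(1:ℝ),-1,2] ![(1:ℝ),1,0] (by norm_num [dot]) (by norm_num [dot]) (by norm_num [dot]) (by norm_num [dot]) (by norm_num [dot]) (by norm_num [dot])
  have T28 := ht ![(1:ℝ),-1,-1] ![(1:ℝ),0,1] ![(1:ℝ),2,-1] (by norm_num [dot]) (by norm_num [dot]) (by norm_num [dot]) (by norm_num [dot]) (by norm_num [dot]) (by norm_num [dot])
  have T29 := ht ![(1:ℝ),-1,0] ![(1:ℝ),1,-2] ![(1:ℝ),1,1] (by norm_num [dot]) (by norm_num [dot]) (by norm_num [dot]) (by norm_num [dot]) (by norm_num [dot]) (by norm_num [dot])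
  have T30 := ht ![(1:ℝ),-1,0] ![(1:ℝ),1,-1] ![(1:ℝ),1,2] (by norm_num [dot]) (by norm_num [dot]) (by norm_num [dot]) (by norm_num [dot]) (by norm_num [dot]) (by norm_num [dot])
  have T31 := ht ![(1:ℝ),-1,1] ![(1:ℝ),0,-1] ![(1:ℝ),2,1] (by norm_num [dot]) (by norm_num [dot]) (by norm_num [dot]) (by norm_num [dot]) (by norm_num [dot]) (by norm_num [dot])
  have T32 := ht ![(1:ℝ),-1,2] ![(1:ℝ),5,2] ![(2:ℝ),0,-1] (by norm_num [dot]) (by norm_num [dot]) (by norm_num [dot]) (by norm_num [dot]) (by norm_num [dot]) (by norm_num [dot])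
  have T33 := ht ![(1:ℝ),-1,4] ![(1:ℝ),1,0] ![(2:ℝ),-2,-1] (by norm_num [dot]) (by norm_num [dot]) (by norm_num [dot]) (by norm_num [dot]) (by norm_num [dot]) (by norm_num [dot])
  have T34 := ht ![(1:ℝ),0,-2] ![(2:ℝ),-5,1] ![(2:ℝ),1,1] (by norm_num [dot]) (by norm_num [dot]) (by norm_num [dot]) (by norm_num [dot]) (by norm_num [dot]) (by norm_num [dot])
  have T35 := ht ![(1:ℝ),0,-2] ![(2:ℝ),-1,1] ![(2:ℝ),5,1] (by norm_num [dot]) (by norm_num [dot]) (by norm_num [dot]) (by norm_num [dot]) (by norm_num [dot]) (by norm_num [dot])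
  have T36 := ht ![(1:ℝ),0,2] ![(2:ℝ),-5,-1] ![(2:ℝ),1,-1] (by norm_num [dot]) (by norm_num [dot]) (by norm_num [dot]) (by norm_num [dot]) (by norm_num [dot]) (by norm_num [dot])
  have T37 := ht ![(1:ℝ),0,2] ![(2:ℝ),-1,-1] ![(2:ℝ),5,-1] (by norm_num [dot]) (by norm_num [dot]) (by norm_num [dot]) (by norm_num [dot]) (by norm_num [dot]) (by norm_num [dot])
  have T38 := ht ![(1:ℝ),2,-2] ![(2:ℝ),-5,-4] ![(2:ℝ),0,1] (by norm_num [dot]) (by norm_num [dot]) (by norm_num [dot]) (by norm_num [dot]) (by norm_num [dot]) (by norm_num [dot])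
  have T39 := ht ![(1:ℝ),2,-2] ![(2:ℝ),-2,-1] ![(2:ℝ),1,2] (by norm_num [dot]) (by norm_num [dot]) (by norm_num [dot]) (by norm_num [dot]) (by norm_num [dot]) (by norm_num [dot])
  have T40 := ht ![(1:ℝ),2,2] ![(2:ℝ),-5,4] ![(2:ℝ),0,-1] (by norm_num [dot]) (by norm_num [dot]) (by norm_num [dot]) (by norm_num [dot]) (by norm_num [dot]) (by norm_num [dot])
  have T41 := ht ![(1:ℝ),2,2] ![(2:ℝ),-2,1] ![(2:ℝ),1,-2] (by norm_num [dot]) (by norm_num [dot]) (by norm_num [dot]) (by norm_num [dot]) (by norm_num [dot]) (by norm_num [dot])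
  have E0 := h01 ![(0:ℝ),0,1] (by norm_num [dot])
  have L0 : (0:ℝ) ≤ g ![(0:ℝ),0,1] := by rcases E0 with h|h <;> rw [h] <;> norm_num
  have U0 : g ![(0:ℝ),0,1] ≤ 1 := by rcases E0 with h|h <;> rw [h] <;> norm_num
  have E1 := h01 ![(0:ℝ),1,-2] (by norm_num [dot])
  have L1 : (0:ℝ) ≤ g ![(0:ℝ),1,-2] := by rcases E1 with h|h <;> rw [h] <;> norm_num
  have U1 : g ![(0:ℝ),1,-2] ≤ 1 := by rcases E1 with h|h <;> rw [h] <;> norm_num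
  have E2 := h01 ![(0:ℝ),1,-1] (by norm_num [dot])
  have L2 : (0:ℝ) ≤ g ![(0:ℝ),1,-1] := by rcases E2 with h|h <;> rw [h] <;> norm_num
  have U2 : g ![(0:ℝ),1,-1] ≤ 1 := by rcases E2 with h|h <;> rw [h] <;> norm_num
  have E3 := h01 ![(0:ℝ),1,0] (by norm_num [dot])
  have L3 : (0:ℝ) ≤ g ![(0:ℝ),1,0] := by rcases E3 with h|h <;> rw [h] <;> norm_num
  have U3 : g ![(0:ℝ),1,0] ≤ 1 := by rcases E3 with h|h <;> rw [h] <;> norm_num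
  have E4 := h01 ![(0:ℝ),1,1] (by norm_num [dot])
  have L4 : (0:ℝ) ≤ g ![(0:ℝ),1,1] := by rcases E4 with h|h <;> rw [h] <;> norm_num
  have U4 : g ![(0:ℝ),1,1] ≤ 1 := by rcases E4 with h|h <;> rw [h] <;> norm_num
  have E5 := h01 ![(0:ℝ),1,2] (by norm_num [dot])
  have L5 : (0:ℝ) ≤ g ![(0:ℝ),1,2] := by rcases E5 with h|h <;> rw [h] <;> norm_num
  have U5 : g ![(0:ℝ),1,2] ≤ 1 := by rcases E5 with h|h <;> rw [h] <;> norm_num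
  have E6 := h01 ![(0:ℝ),2,-1] (by norm_num [dot])
  have L6 : (0:ℝ) ≤ g ![(0:ℝ),2,-1] := by rcases E6 with h|h <;> rw [h] <;> norm_num
  have U6 : g ![(0:ℝ),2,-1] ≤ 1 := by rcases E6 with h|h <;> rw [h] <;> norm_num
  have E7 := h01 ![(0:ℝ),2,1] (by norm_num [dot])
  have L7 : (0:ℝ) ≤ g ![(0:ℝ),2,1] := by rcases E7 with h|h <;> rw [h] <;> norm_num
  have U7 : g ![(0:ℝ),2,1] ≤ 1 := by rcases E7 with h|h <;> rw [h] <;> norm_num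
  have E8 := h01 ![(1:ℝ),-4,-1] (by norm_num [dot])
  have L8 : (0:ℝ) ≤ g ![(1:ℝ),-4,-1] := by rcases E8 with h|h <;> rw [h] <;> norm_num
  have U8 : g ![(1:ℝ),-4,-1] ≤ 1 := by rcases E8 with h|h <;> rw [h] <;> norm_num
  have E9 := h01 ![(1:ℝ),-4,1] (by norm_num [dot])
  have L9 : (0:ℝ) ≤ g ![(1:ℝ),-4,1] := by rcases E9 with h|h <;> rw [h] <;> norm_num
  have U9 : g ![(1:ℝ),-4,1] ≤ 1 := by rcases E9 with h|h <;> rw [h] <;> norm_num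
  have E10 := h01 ![(1:ℝ),-2,-1] (by norm_num [dot])
  have L10 : (0:ℝ) ≤ g ![(1:ℝ),-2,-1] := by rcases E10 with h|h <;> rw [h] <;> norm_num
  have U10 : g ![(1:ℝ),-2,-1] ≤ 1 := by rcases E10 with h|h <;> rw [h] <;> norm_num
  have E11 := h01 ![(1:ℝ),-2,1] (by norm_num [dot])
  have L11 : (0:ℝ) ≤ g ![(1:ℝ),-2,1] := by rcases E11 with h|h <;> rw [h] <;> norm_num
  have U11 : g ![(1:ℝ),-2,1] ≤ 1 := by rcases E11 with h|h <;> rw [h] <;> norm_num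
  have E12 := h01 ![(1:ℝ),-1,-4] (by norm_num [dot])
  have L12 : (0:ℝ) ≤ g ![(1:ℝ),-1,-4] := by rcases E12 with h|h <;> rw [h] <;> norm_num
  have U12 : g ![(1:ℝ),-1,-4] ≤ 1 := by rcases E12 with h|h <;> rw [h] <;> norm_num
  have E13 := h01 ![(1:ℝ),-1,-2] (by norm_num [dot])
  have L13 : (0:ℝ) ≤ g ![(1:ℝ),-1,-2] := by rcases E13 with h|h <;> rw [h] <;> norm_num
  have U13 : g ![(1:ℝ),-1,-2] ≤ 1 := by rcases E13 with h|h <;> rw [h] <;> norm_num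
  have E14 := h01 ![(1:ℝ),-1,-1] (by norm_num [dot])
  have L14 : (0:ℝ) ≤ g ![(1:ℝ),-1,-1] := by rcases E14 with h|h <;> rw [h] <;> norm_num
  have U14 : g ![(1:ℝ),-1,-1] ≤ 1 := by rcases E14 with h|h <;> rw [h] <;> norm_num
  have E15 := h01 ![(1:ℝ),-1,0] (by norm_num [dot])
  have L15 : (0:ℝ) ≤ g ![(1:ℝ),-1,0] := by rcases E15 with h|h <;> rw [h] <;> norm_num
  have U15 : g ![(1:ℝ),-1,0] ≤ 1 := by rcases E15 with h|h <;> rw [h] <;> norm_num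
  have E16 := h01 ![(1:ℝ),-1,1] (by norm_num [dot])
  have L16 : (0:ℝ) ≤ g ![(1:ℝ),-1,1] := by rcases E16 with h|h <;> rw [h] <;> norm_num
  have U16 : g ![(1:ℝ),-1,1] ≤ 1 := by rcases E16 with h|h <;> rw [h] <;> norm_num
  have E17 := h01 ![(1:ℝ),-1,2] (by norm_num [dot])
  have L17 : (0:ℝ) ≤ g ![(1:ℝ),-1,2] := by rcases E17 with h|h <;> rw [h] <;> norm_num
  have U17 : g ![(1:ℝ),-1,2] ≤ 1 := by rcases E17 with h|h <;> rw [h] <;> norm_num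
  have E18 := h01 ![(1:ℝ),-1,4] (by norm_num [dot])
  have L18 : (0:ℝ) ≤ g ![(1:ℝ),-1,4] := by rcases E18 with h|h <;> rw [h] <;> norm_num
  have U18 : g ![(1:ℝ),-1,4] ≤ 1 := by rcases E18 with h|h <;> rw [h] <;> norm_num
  have E19 := h01 ![(1:ℝ),0,-2] (by norm_num [dot])
  have L19 : (0:ℝ) ≤ g ![(1:ℝ),0,-2] := by rcases E19 with h|h <;> rw [h] <;> norm_num
  have U19 : g ![(1:ℝ),0,-2] ≤ 1 := by rcases E19 with h|h <;> rw [h] <;> norm_num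
  have E20 := h01 ![(1:ℝ),0,-1] (by norm_num [dot])
  have L20 : (0:ℝ) ≤ g ![(1:ℝ),0,-1] := by rcases E20 with h|h <;> rw [h] <;> norm_num
  have U20 : g ![(1:ℝ),0,-1] ≤ 1 := by rcases E20 with h|h <;> rw [h] <;> norm_num
  have E21 := h01 ![(1:ℝ),0,0] (by norm_num [dot])
  have L21 : (0:ℝ) ≤ g ![(1:ℝ),0,0] := by rcases E21 with h|h <;> rw [h] <;> norm_num
  have U21 : g ![(1:ℝ),0,0] ≤ 1 := by rcases E21 with h|h <;> rw [h] <;> norm_num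
  have E22 := h01 ![(1:ℝ),0,1] (by norm_num [dot])
  have L22 : (0:ℝ) ≤ g ![(1:ℝ),0,1] := by rcases E22 with h|h <;> rw [h] <;> norm_num
  have U22 : g ![(1:ℝ),0,1] ≤ 1 := by rcases E22 with h|h <;> rw [h] <;> norm_num
  have E23 := h01 ![(1:ℝ),0,2] (by norm_num [dot])
  have L23 : (0:ℝ) ≤ g ![(1:ℝ),0,2] := by rcases E23 with h|h <;> rw [h] <;> norm_num
  have U23 : g ![(1:ℝ),0,2] ≤ 1 := by rcases E23 with h|h <;> rw [h] <;> norm_num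
  have E24 := h01 ![(1:ℝ),1,-2] (by norm_num [dot])
  have L24 : (0:ℝ) ≤ g ![(1:ℝ),1,-2] := by rcases E24 with h|h <;> rw [h] <;> norm_num
  have U24 : g ![(1:ℝ),1,-2] ≤ 1 := by rcases E24 with h|h <;> rw [h] <;> norm_num
  have E25 := h01 ![(1:ℝ),1,-1] (by norm_num [dot])
  have L25 : (0:ℝ) ≤ g ![(1:ℝ),1,-1] := by rcases E25 with h|h <;> rw [h] <;> norm_num
  have U25 : g ![(1:ℝ),1,-1] ≤ 1 := by rcases E25 with h|h <;> rw [h] <;> norm_num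
  have E26 := h01 ![(1:ℝ),1,0] (by norm_num [dot])
  have L26 : (0:ℝ) ≤ g ![(1:ℝ),1,0] := by rcases E26 with h|h <;> rw [h] <;> norm_num
  have U26 : g ![(1:ℝ),1,0] ≤ 1 := by rcases E26 with h|h <;> rw [h] <;> norm_num
  have E27 := h01 ![(1:ℝ),1,1] (by norm_num [dot])
  have L27 : (0:ℝ) ≤ g ![(1:ℝ),1,1] := by rcases E27 with h|h <;> rw [h] <;> norm_num
  have U27 : g ![(1:ℝ),1,1] ≤ 1 := by rcases E27 with h|h <;> rw [h] <;> norm_num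
  have E28 := h01 ![(1:ℝ),1,2] (by norm_num [dot])
  have L28 : (0:ℝ) ≤ g ![(1:ℝ),1,2] := by rcases E28 with h|h <;> rw [h] <;> norm_num
  have U28 : g ![(1:ℝ),1,2] ≤ 1 := by rcases E28 with h|h <;> rw [h] <;> norm_num
  have E29 := h01 ![(1:ℝ),2,-2] (by norm_num [dot])
  have L29 : (0:ℝ) ≤ g ![(1:ℝ),2,-2] := by rcases E29 with h|h <;> rw [h] <;> norm_num
  have U29 : g ![(1:ℝ),2,-2] ≤ 1 := by rcases E29 with h|h <;> rw [h] <;> norm_num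
  have E30 := h01 ![(1:ℝ),2,-1] (by norm_num [dot])
  have L30 : (0:ℝ) ≤ g ![(1:ℝ),2,-1] := by rcases E30 with h|h <;> rw [h] <;> norm_num
  have U30 : g ![(1:ℝ),2,-1] ≤ 1 := by rcases E30 with h|h <;> rw [h] <;> norm_num
  have E31 := h01 ![(1:ℝ),2,1] (by norm_num [dot])
  have L31 : (0:ℝ) ≤ g ![(1:ℝ),2,1] := by rcases E31 with h|h <;> rw [h] <;> norm_num
  have U31 : g ![(1:ℝ),2,1] ≤ 1 := by rcases E31 with h|h <;> rw [h] <;> norm_num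
  have E32 := h01 ![(1:ℝ),2,2] (by norm_num [dot])
  have L32 : (0:ℝ) ≤ g ![(1:ℝ),2,2] := by rcases E32 with h|h <;> rw [h] <;> norm_num
  have U32 : g ![(1:ℝ),2,2] ≤ 1 := by rcases E32 with h|h <;> rw [h] <;> norm_num
  have E33 := h01 ![(1:ℝ),5,-2] (by norm_num [dot])
  have L33 : (0:ℝ) ≤ g ![(1:ℝ),5,-2] := by rcases E33 with h|h <;> rw [h] <;> norm_num
  have U33 : g ![(1:ℝ),5,-2] ≤ 1 := by rcases E33 with h|h <;> rw [h] <;> norm_num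
  have E34 := h01 ![(1:ℝ),5,2] (by norm_num [dot])
  have L34 : (0:ℝ) ≤ g ![(1:ℝ),5,2] := by rcases E34 with h|h <;> rw [h] <;> norm_num
  have U34 : g ![(1:ℝ),5,2] ≤ 1 := by rcases E34 with h|h <;> rw [h] <;> norm_num
  have E35 := h01 ![(2:ℝ),-5,-4] (by norm_num [dot])
  have L35 : (0:ℝ) ≤ g ![(2:ℝ),-5,-4] := by rcases E35 with h|h <;> rw [h] <;> norm_num
  have U35 : g ![(2:ℝ),-5,-4] ≤ 1 := by rcases E35 with h|h <;> rw [h] <;> norm_num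
  have E36 := h01 ![(2:ℝ),-5,-1] (by norm_num [dot])
  have L36 : (0:ℝ) ≤ g ![(2:ℝ),-5,-1] := by rcases E36 with h|h <;> rw [h] <;> norm_num
  have U36 : g ![(2:ℝ),-5,-1] ≤ 1 := by rcases E36 with h|h <;> rw [h] <;> norm_num
  have E37 := h01 ![(2:ℝ),-5,1] (by norm_num [dot])
  have L37 : (0:ℝ) ≤ g ![(2:ℝ),-5,1] := by rcases E37 with h|h <;> rw [h] <;> norm_num
  have U37 : g ![(2:ℝ),-5,1] ≤ 1 := by rcases E37 with h|h <;> rw [h] <;> norm_num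
  have E38 := h01 ![(2:ℝ),-5,4] (by norm_num [dot])
  have L38 : (0:ℝ) ≤ g ![(2:ℝ),-5,4] := by rcases E38 with h|h <;> rw [h] <;> norm_num
  have U38 : g ![(2:ℝ),-5,4] ≤ 1 := by rcases E38 with h|h <;> rw [h] <;> norm_num
  have E39 := h01 ![(2:ℝ),-2,-1] (by norm_num [dot])
  have L39 : (0:ℝ) ≤ g ![(2:ℝ),-2,-1] := by rcases E39 with h|h <;> rw [h] <;> norm_num
  have U39 : g ![(2:ℝ),-2,-1] ≤ 1 := by rcases E39 with h|h <;> rw [h] <;> norm_num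
  have E40 := h01 ![(2:ℝ),-2,1] (by norm_num [dot])
  have L40 : (0:ℝ) ≤ g ![(2:ℝ),-2,1] := by rcases E40 with h|h <;> rw [h] <;> norm_num
  have U40 : g ![(2:ℝ),-2,1] ≤ 1 := by rcases E40 with h|h <;> rw [h] <;> norm_num
  have E41 := h01 ![(2:ℝ),-1,-1] (by norm_num [dot])
  have L41 : (0:ℝ) ≤ g ![(2:ℝ),-1,-1] := by rcases E41 with h|h <;> rw [h] <;> norm_num
  have U41 : g ![(2:ℝ),-1,-1] ≤ 1 := by rcases E41 with h|h <;> rw [h] <;> norm_num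
  have E42 := h01 ![(2:ℝ),-1,1] (by norm_num [dot])
  have L42 : (0:ℝ) ≤ g ![(2:ℝ),-1,1] := by rcases E42 with h|h <;> rw [h] <;> norm_num
  have U42 : g ![(2:ℝ),-1,1] ≤ 1 := by rcases E42 with h|h <;> rw [h] <;> norm_num
  have E43 := h01 ![(2:ℝ),0,-1] (by norm_num [dot])
  have L43 : (0:ℝ) ≤ g ![(2:ℝ),0,-1] := by rcases E43 with h|h <;> rw [h] <;> norm_num
  have U43 : g ![(2:ℝ),0,-1] ≤ 1 := by rcases E43 with h|h <;> rw [h] <;> norm_num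
  have E44 := h01 ![(2:ℝ),0,1] (by norm_num [dot])
  have L44 : (0:ℝ) ≤ g ![(2:ℝ),0,1] := by rcases E44 with h|h <;> rw [h] <;> norm_num
  have U44 : g ![(2:ℝ),0,1] ≤ 1 := by rcases E44 with h|h <;> rw [h] <;> norm_num
  have E45 := h01 ![(2:ℝ),1,-2] (by norm_num [dot])
  have L45 : (0:ℝ) ≤ g ![(2:ℝ),1,-2] := by rcases E45 with h|h <;> rw [h] <;> norm_num
  have U45 : g ![(2:ℝ),1,-2] ≤ 1 := by rcases E45 with h|h <;> rw [h] <;> norm_num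
  have E46 := h01 ![(2:ℝ),1,-1] (by norm_num [dot])
  have L46 : (0:ℝ) ≤ g ![(2:ℝ),1,-1] := by rcases E46 with h|h <;> rw [h] <;> norm_num
  have U46 : g ![(2:ℝ),1,-1] ≤ 1 := by rcases E46 with h|h <;> rw [h] <;> norm_num
  have E47 := h01 ![(2:ℝ),1,1] (by norm_num [dot])
  have L47 : (0:ℝ) ≤ g ![(2:ℝ),1,1] := by rcases E47 with h|h <;> rw [h] <;> norm_num
  have U47 : g ![(2:ℝ),1,1] ≤ 1 := by rcases E47 with h|h <;> rw [h] <;> norm_num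
  have E48 := h01 ![(2:ℝ),1,2] (by norm_num [dot])
  have L48 : (0:ℝ) ≤ g ![(2:ℝ),1,2] := by rcases E48 with h|h <;> rw [h] <;> norm_num
  have U48 : g ![(2:ℝ),1,2] ≤ 1 := by rcases E48 with h|h <;> rw [h] <;> norm_num
  have E49 := h01 ![(2:ℝ),5,-1] (by norm_num [dot])
  have L49 : (0:ℝ) ≤ g ![(2:ℝ),5,-1] := by rcases E49 with h|h <;> rw [h] <;> norm_num
  have U49 : g ![(2:ℝ),5,-1] ≤ 1 := by rcases E49 with h|h <;> rw [h] <;> norm_num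
  have E50 := h01 ![(2:ℝ),5,1] (by norm_num [dot])
  have L50 : (0:ℝ) ≤ g ![(2:ℝ),5,1] := by rcases E50 with h|h <;> rw [h] <;> norm_num
  have U50 : g ![(2:ℝ),5,1] ≤ 1 := by rcases E50 with h|h <;> rw [h] <;> norm_num
  have E51 := h01 ![(5:ℝ),-2,-1] (by norm_num [dot])
  have L51 : (0:ℝ) ≤ g ![(5:ℝ),-2,-1] := by rcases E51 with h|h <;> rw [h] <;> norm_num
  have U51 : g ![(5:ℝ),-2,-1] ≤ 1 := by rcases E51 with h|h <;> rw [h] <;> norm_num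
  have E52 := h01 ![(5:ℝ),-2,1] (by norm_num [dot])
  have L52 : (0:ℝ) ≤ g ![(5:ℝ),-2,1] := by rcases E52 with h|h <;> rw [h] <;> norm_num
  have U52 : g ![(5:ℝ),-2,1] ≤ 1 := by rcases E52 with h|h <;> rw [h] <;> norm_num
  have E53 := h01 ![(5:ℝ),-1,-2] (by norm_num [dot])
  have L53 : (0:ℝ) ≤ g ![(5:ℝ),-1,-2] := by rcases E53 with h|h <;> rw [h] <;> norm_num
  have U53 : g ![(5:ℝ),-1,-2] ≤ 1 := by rcases E53 with h|h <;> rw [h] <;> norm_num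
  have E54 := h01 ![(5:ℝ),-1,2] (by norm_num [dot])
  have L54 : (0:ℝ) ≤ g ![(5:ℝ),-1,2] := by rcases E54 with h|h <;> rw [h] <;> norm_num
  have U54 : g ![(5:ℝ),-1,2] ≤ 1 := by rcases E54 with h|h <;> rw [h] <;> norm_num
  have E55 := h01 ![(5:ℝ),1,-2] (by norm_num [dot])
  have L55 : (0:ℝ) ≤ g ![(5:ℝ),1,-2] := by rcases E55 with h|h <;> rw [h] <;> norm_num
  have U55 : g ![(5:ℝ),1,-2] ≤ 1 := by rcases E55 with h|h <;> rw [h] <;> norm_num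
  have E56 := h01 ![(5:ℝ),1,2] (by norm_num [dot])
  have L56 : (0:ℝ) ≤ g ![(5:ℝ),1,2] := by rcases E56 with h|h <;> rw [h] <;> norm_num
  have U56 : g ![(5:ℝ),1,2] ≤ 1 := by rcases E56 with h|h <;> rw [h] <;> norm_num
  have E57 := h01 ![(5:ℝ),2,-1] (by norm_num [dot])
  have L57 : (0:ℝ) ≤ g ![(5:ℝ),2,-1] := by rcases E57 with h|h <;> rw [h] <;> norm_num
  have U57 : g ![(5:ℝ),2,-1] ≤ 1 := by rcases E57 with h|h <;> rw [h] <;> norm_num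
  have E58 := h01 ![(5:ℝ),2,1] (by norm_num [dot])
  have L58 : (0:ℝ) ≤ g ![(5:ℝ),2,1] := by rcases E58 with h|h <;> rw [h] <;> norm_num
  have U58 : g ![(5:ℝ),2,1] ≤ 1 := by rcases E58 with h|h <;> rw [h] <;> norm_num
  rcases E26 with h26|h26
  · -- g=0
    rcases E3 with h3|h3
    · -- g=0
      rcases E20 with h20|h20
      · -- g=0
        rcases E16 with h16|h16
        · -- g=0
          linarith only [T5, T6, T8, T9, T10, T11, T25, T26, T27, T28, T32, T34, T36, L2, U2, L3, U3, L4, U4, L13, U13, L14, U14, L16, U16, L17, U17, L19, U19, L20, U20, L21, U21, L22, U22, L23, U23, L26, U26, L30, U30, L33, U33, L34, U34, L36, U36, L37, U37, L43, U43, L44, U44, L46, U46, L47, U47, h3, h16, h20, h26]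
        · -- g=1
          rcases E21 with h21|h21
          · -- g=0
            linarith only [T0, T1, T5, T7, T9, T10, T11, T13, T14, T17, T22, T23, T27, T28, T30, T32, T36, T37, L0, U0, L2, U2, L3, U3, L4, U4, L5, U5, L6, U6, L10, U10, L11, U11, L14, U14, L15, U15, L16, U16, L17, U17, L20, U20, L21, U21, L22, U22, L23, U23, L25, U25, L26, U26, L27, U27, L28, U28, L30, U30, L34, U34, L36, U36, L41, U41, L43, U43, L46, U46, L49, U49, L53, U53, L57, U57, h3, h16, h20, h21, h26]
          · -- g=1
            linarith only [T0, T1, T5, T7, T9, T10, T11, T27, T28, T29, T32, T36, T37, L0, U0, L2, U2, L3, U3, L4, U4, L14, U14, L15, U15, L16, U16, L17, U17, L20, U20, L21, U21, L22, U22, L23, U23, L24, U24, L26, U26, L27, U27, L30, U30, L34, U34, L36, U36, L41, U41, L43, U43, L46, U46, L49, U49, h3, h16, h20, h21, h26]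
      · -- g=1
        rcases E14 with h14|h14
        · -- g=0
          linarith only [T5, T6, T8, T9, T13, T15, T16, T25, T26, T28, T31, T34, L2, U2, L3, U3, L4, U4, L5, U5, L6, U6, L13, U13, L14, U14, L16, U16, L19, U19, L20, U20, L21, U21, L22, U22, L26, U26, L30, U30, L31, U31, L33, U33, L37, U37, L44, U44, L47, U47, L52, U52, L56, U56, h3, h14, h20, h26]
        · -- g=1
          rcases E21 with h21|h21
          · -- g=0
            linarith only [T0, T1, T2, T3, T5, T6, T8, T9, T12, T19, T22, T23, T25, T26, T29, T31, T34, T35, L0, U0, L1, U1, L2, U2, L3, U3, L4, U4, L7, U7, L10, U10, L11, U11, L13, U13, L14, U14, L15, U15, L16, U16, L19, U19, L20, U20, L21, U21, L22, U22, L24, U24, L25, U25, L26, U26, L27, U27, L31, U31, L33, U33, L37, U37, L42, U42, L44, U44, L47, U47, L50, U50, L54, U54, L58, U58, h3, h14, h20, h21, h26]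
          · -- g=1
            linarith only [T0, T1, T5, T6, T8, T12, T25, T26, T30, T31, T34, T35, L0, U0, L2, U2, L3, U3, L4, U4, L13, U13, L14, U14, L15, U15, L16, U16, L19, U19, L20, U20, L21, U21, L25, U25, L26, U26, L28, U28, L31, U31, L33, U33, L37, U37, L42, U42, L44, U44, L47, U47, L50, U50, h3, h14, h20, h21, h26]
    · -- g=1
      linarith only [T0, T1, T2, T3, T5, T6, T9, T11, T13, T14, T16, T18, T22, T23, T25, T27, T29, T30, L0, U0, L1, U1, L2, U2, L3, U3, L4, U4, L5, U5, L6, U6, L7, U7, L10, U10, L11, U11, L13, U13, L14, U14, L15, U15, L16, U16, L17, U17, L20, U20, L21, U21, L22, U22, L24, U24, L25, U25, L26, U26, L27, U27, L28, U28, L46, U46, L47, U47, L55, U55, L56, U56, L57, U57, L58, U58, h3, h26]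
  · -- g=1
    rcases E3 with h3|h3
    · -- g=0
      linarith only [T0, T1, T5, T6, T8, T9, T10, T11, T20, T21, T24, T25, T27, T33, T34, T36, T38, T39, T40, T41, L0, U0, L2, U2, L3, U3, L4, U4, L8, U8, L9, U9, L12, U12, L13, U13, L14, U14, L15, U15, L16, U16, L17, U17, L18, U18, L19, U19, L20, U20, L21, U21, L22, U22, L23, U23, L26, U26, L29, U29, L32, U32, L35, U35, L36, U36, L37, U37, L38, U38, L39, U39, L40, U40, L43, U43, L44, U44, L45, U45, L46, U46, L47, U47, L48, U48, h3, h26]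
    · -- g=1
      linarith only [T0, T1, T2, T4, T5, T7, T9, T12, T13, T15, T17, T19, T25, T27, T28, T29, T30, T31, L0, U0, L1, U1, L2, U2, L3, U3, L4, U4, L5, U5, L6, U6, L7, U7, L13, U13, L14, U14, L15, U15, L16, U16, L17, U17, L20, U20, L21, U21, L22, U22, L24, U24, L25, U25, L26, U26, L27, U27, L28, U28, L30, U30, L31, U31, L41, U41, L42, U42, L51, U51, L52, U52, L53, U53, L54, U54, h3, h26]

end KS12

/-- Kochen–Specker via valuations: on a finite-dimensional complex Hilbert
space of dimension at least 3 there is no assignment `v` of real numbers to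
self-adjoint operators such that `v A` is always an eigenvalue of `A`, and `v`
is additive and multiplicative on commuting pairs of self-adjoint operators. -/
theorem stmt_12 {H : Type*} [NormedAddCommGroup H] [InnerProductSpace ℂ H]
    [FiniteDimensional ℂ H] (hdim : 3 ≤ Module.finrank ℂ H) :
    ¬ ∃ v : (H →L[ℂ] H) → ℝ,
      (∀ A : H →L[ℂ] H, IsSelfAdjoint A →
        Module.End.HasEigenvalue (A.toLinearMap) ((v A : ℝ) : ℂ)) ∧
      (∀ A B : H →L[ℂ] H, IsSelfAdjoint A → IsSelfAdjoint B → A * B = B * A →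
        v (A + B) = v A + v B ∧ v (A * B) = v A * v B) := by
  classical
  rintro ⟨v, heig, hops⟩
  open KS12 in
  have hv1 : v 1 = 1 := KS12.v_one v heig
  set n := Module.finrank ℂ H with hn
  set b := stdOrthonormalBasis ℂ H with hb
  have hcard : Fintype.card (Fin n) = Module.finrank ℂ H := by simp [hn]
  -- sum over basis is 1
  have horthb : ∀ i ∈ (Finset.univ : Finset (Fin n)), ∀ j ∈ Finset.univ, i ≠ j →
      ⟪b i, b j⟫ = 0 := fun i _ j _ hij => b.orthonormal.2 hij
  have hsum : ∑ i, v (KS12.projOp (b i)) = 1 := by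
    rw [← KS12.v_sum v hops (fun i => b i) Finset.univ horthb, KS12.sum_projOp b, hv1]
  have h01b : ∀ i, v (KS12.projOp (b i)) = 0 ∨ v (KS12.projOp (b i)) = 1 :=
    fun i => KS12.v_proj01 v hops (b i) (b.orthonormal.1 i)
  -- there is a distinguished index
  have hex : ∃ i₀, v (KS12.projOp (b i₀)) = 1 := by
    by_contra hno
    push_neg at hno
    have : ∀ i ∈ (Finset.univ : Finset (Fin n)), v (KS12.projOp (b i)) = 0 := by
      intro i _
      rcases h01b i with h | h
      · exact h
      · exact absurd h (hno i)
    rw [Finset.sum_eq_zero this] at hsum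
    norm_num at hsum
  obtain ⟨i₀, hi₀⟩ := hex
  have h0 : ∀ i, i ≠ i₀ → v (KS12.projOp (b i)) = 0 := by
    intro i hi
    have herase : ∑ i ∈ Finset.univ.erase i₀, v (KS12.projOp (b i)) = 0 := by
      have h2 : v (KS12.projOp (b i₀)) + ∑ i ∈ Finset.univ.erase i₀, v (KS12.projOp (b i)) =
          ∑ i, v (KS12.projOp (b i)) :=
        by
          have h3 := Finset.add_sum_erase Finset.univ (fun i => v (KS12.projOp (b i)))
            (Finset.mem_univ i₀)
          beta_reduce at h3
          exact h3
      linarith [h2, hsum, hi₀]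
    have hnn : ∀ i ∈ Finset.univ.erase i₀, 0 ≤ v (KS12.projOp (b i)) := by
      intro i _
      rcases h01b i with h | h <;> rw [h] <;> norm_num
    exact (Finset.sum_eq_zero_iff_of_nonneg hnn).mp herase i
      (Finset.mem_erase.mpr ⟨hi, Finset.mem_univ i⟩)
  -- pick two more indices
  have hcard2 : 1 < (Finset.univ.erase i₀ : Finset (Fin n)).card := by
    rw [Finset.card_erase_of_mem (Finset.mem_univ i₀), Finset.card_univ, Fintype.card_fin]
    omega
  obtain ⟨j, hj, k, hk, hjk⟩ := Finset.one_lt_card.mp hcard2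
  have hij : i₀ ≠ j := (Finset.mem_erase.mp hj).1.symm
  have hik : i₀ ≠ k := (Finset.mem_erase.mp hk).1.symm
  -- the coloring
  set g : (Fin 3 → ℝ) → ℝ :=
    fun a => v (KS12.projOp (KS12.nvec ![b i₀, b j, b k] a)) with hg
  have he : Orthonormal ℂ ![b i₀, b j, b k] := by
    have hbo := orthonormal_iff_ite.mp b.orthonormal
    rw [orthonormal_iff_ite]
    intro s t
    fin_cases s <;> fin_cases t <;> simp [hbo, hij, hik, hjk, hij.symm, hik.symm, hjk.symm]
  exact KS12.KS_core g
    (fun a ha => KS12.v_proj01 v hops _ (KS12.norm_nvec _ he a ha))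
    (fun a c d ha hc hd hac had hcd =>
      KS12.triple_sum v hops hv1 b i₀ j k hij hik hjk hcard h0 a c d ha hc hd hac had hcd)
end
end

section
/- Let H be a Hilbert space with dim H ≥ 3 and L(H) the orthomodular lattice of its closed subspaces. There is no global valuation on L(H): no family of Boolean homomorphisms (v_i : W_i → 2), indexed by all Boolean subalgebras W_i of L(H), such that v_i and v_j agree on W_i ∩ W_j for all i,j. -/
variable (H : Type*) [NormedAddCommGroup H] [InnerProductSpace ℂ H]
  [CompleteSpace H]

/-- The closed subspaces of the Hilbert space `H`. -/
def ClosedSubspace := {K : Submodule ℂ H // IsClosed (K : Set H)}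

variable {H}

namespace ClosedSubspace

/-- Meet: intersection. -/
def meet (K K' : ClosedSubspace H) : ClosedSubspace H :=
  ⟨K.1 ⊓ K'.1, by rw [Submodule.coe_inf]; exact K.2.inter K'.2⟩

/-- Join: closure of the span of the union. -/
def join (K K' : ClosedSubspace H) : ClosedSubspace H :=
  ⟨(K.1 ⊔ K'.1).topologicalClosure, Submodule.isClosed_topologicalClosure _⟩

/-- Orthocomplement. -/
noncomputable def compl (K : ClosedSubspace H) : ClosedSubspace H :=
  ⟨K.1ᗮ, Submodule.isClosed_orthogonal _⟩

/-- The zero subspace. -/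
def bot : ClosedSubspace H := ⟨⊥, by rw [Submodule.bot_coe]; exact isClosed_singleton⟩

/-- The whole space. -/
def top : ClosedSubspace H := ⟨⊤, by rw [Submodule.top_coe]; exact isClosed_univ⟩

end ClosedSubspace

/-- A Boolean subalgebra of the lattice of closed subspaces. -/
def IsBoolSub (W : Set (ClosedSubspace H)) : Prop :=
  ClosedSubspace.bot ∈ W ∧ ClosedSubspace.top ∈ W ∧
  (∀ a ∈ W, a.compl ∈ W) ∧ (∀ a ∈ W, ∀ b ∈ W, a.meet b ∈ W) ∧
  (∀ a ∈ W, ∀ b ∈ W, a.join b ∈ W) ∧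
  (∀ a ∈ W, ∀ b ∈ W, ∀ c ∈ W, a.meet (b.join c) = (a.meet b).join (a.meet c))

/-- A Boolean homomorphism from `W` to the two-element Boolean algebra. -/
def IsHomOn (W : Set (ClosedSubspace H)) (v : ClosedSubspace H → Bool) : Prop :=
  v ClosedSubspace.bot = false ∧ v ClosedSubspace.top = true ∧
  (∀ a ∈ W, v a.compl = !(v a)) ∧
  (∀ a ∈ W, ∀ b ∈ W, v (a.meet b) = (v a && v b)) ∧
  (∀ a ∈ W, ∀ b ∈ W, v (a.join b) = (v a || v b))

set_option synthInstance.maxHeartbeats 1000000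
set_option maxHeartbeats 4000000
set_option linter.unusedSectionVars false

namespace KS

instance orthComplete (K : Submodule ℂ H) : CompleteSpace (Kᗮ) :=
  (Submodule.isClosed_orthogonal _).completeSpace_coe

lemma triorth (K : Submodule ℂ H) : Kᗮᗮᗮ = Kᗮ :=
  le_antisymm (Submodule.orthogonal_le K.le_orthogonal_orthogonal)
    (Submodule.le_orthogonal_orthogonal _)

lemma dorth_eq_self {K : Submodule ℂ H} (hK : IsClosed (K : Set H)) : Kᗮᗮ = K := by
  haveI : CompleteSpace K := hK.completeSpace_coe
  exact Submodule.orthogonal_orthogonal K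

lemma key (A B : Submodule ℂ H) (hBA : B ≤ Aᗮ) (hd : (A ⊔ B)ᗮ = ⊥) : Aᗮ = Bᗮᗮ := by
  have h1 : Bᗮᗮ ≤ Aᗮ := by
    rw [← Submodule.orthogonal_orthogonal (K := Aᗮ)]
    exact Submodule.orthogonal_le (Submodule.orthogonal_le hBA)
  have h2 := Submodule.sup_orthogonal_inf_of_hasOrthogonalProjection h1
  rw [Submodule.orthogonal_orthogonal (K := Bᗮ)] at h2
  have h3 : Bᗮ ⊓ Aᗮ = ⊥ := by rw [Submodule.inf_orthogonal, ← hd, sup_comm]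
  rw [h3, sup_bot_eq] at h2
  exact h2.symm

variable {n : ℕ}

structure FamOK (a : Fin n → Submodule ℂ H) : Prop where
  closed : ∀ i, IsClosed (a i : Set H)
  orth : ∀ i j, i ≠ j → a i ≤ (a j)ᗮ
  dense : ((Finset.univ.sup a)ᗮ : Submodule ℂ H) = ⊥

noncomputable def J (a : Fin n → Submodule ℂ H) (S : Finset (Fin n)) : Submodule ℂ H := ((S.sup a)ᗮ)ᗮ

lemma sup_le_orth_of_disj (a : Fin n → Submodule ℂ H) (ha : FamOK a)
    {S : Finset (Fin n)} {j : Fin n} (hj : j ∉ S) : S.sup a ≤ (a j)ᗮ :=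
  Finset.sup_le fun i hi => ha.orth i j (fun h => hj (h ▸ hi))

lemma orth_sup_eq (a : Fin n → Submodule ℂ H) (ha : FamOK a) (S : Finset (Fin n)) :
    (S.sup a)ᗮ = J a Sᶜ := by
  apply key
  · exact Finset.sup_le fun j hj =>
      (Submodule.le_orthogonal_orthogonal (a j)).trans
        (Submodule.orthogonal_le (sup_le_orth_of_disj a ha (Finset.mem_compl.mp hj)))
  · rw [← Finset.sup_union, Finset.union_compl]; exact ha.dense

lemma J_compl (a : Fin n → Submodule ℂ H) (ha : FamOK a) (S : Finset (Fin n)) :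
    (J a S)ᗮ = J a Sᶜ := by
  rw [J, triorth]; exact orth_sup_eq a ha S

lemma J_join (a : Fin n → Submodule ℂ H) (S T : Finset (Fin n)) :
    (J a S ⊔ J a T)ᗮᗮ = J a (S ∪ T) := by
  have : (J a S ⊔ J a T)ᗮ = ((S ∪ T).sup a)ᗮ := by
    rw [← Submodule.inf_orthogonal, J, J, triorth, triorth, Submodule.inf_orthogonal,
      Finset.sup_union]
  rw [this]; rfl

lemma J_meet (a : Fin n → Submodule ℂ H) (ha : FamOK a) (S T : Finset (Fin n)) :
    J a S ⊓ J a T = J a (S ∩ T) := by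
  have h1 : J a S ⊓ J a T = ((J a S)ᗮ ⊔ (J a T)ᗮ)ᗮ := by
    rw [← Submodule.inf_orthogonal, J, J, triorth, triorth]
  rw [h1, J_compl a ha, J_compl a ha, ← triorth, J_join, J_compl a ha]
  congr 1
  simp [Finset.compl_union]

lemma J_empty (a : Fin n → Submodule ℂ H) : J a ∅ = ⊥ := by
  simp [J, Submodule.bot_orthogonal_eq_top, Submodule.top_orthogonal_eq_bot]

lemma J_univ (a : Fin n → Submodule ℂ H) (ha : FamOK a) : J a Finset.univ = ⊤ := by
  rw [J, ha.dense, Submodule.bot_orthogonal_eq_top]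

lemma J_singleton (a : Fin n → Submodule ℂ H) (ha : FamOK a) (i : Fin n) :
    J a {i} = a i := by
  rw [J, Finset.sup_singleton]; exact dorth_eq_self (ha.closed i)

/-! ### The Boolean subalgebra generated by an orthogonal family -/

noncomputable def JC (a : Fin n → Submodule ℂ H) (S : Finset (Fin n)) : ClosedSubspace H :=
  ⟨J a S, Submodule.isClosed_orthogonal _⟩

noncomputable def Wf (a : Fin n → Submodule ℂ H) : Set (ClosedSubspace H) := Set.range (JC a)

lemma JC_meet (a : Fin n → Submodule ℂ H) (ha : FamOK a) (S T : Finset (Fin n)) :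
    (JC a S).meet (JC a T) = JC a (S ∩ T) := Subtype.ext (J_meet a ha S T)

lemma JC_join (a : Fin n → Submodule ℂ H) (S T : Finset (Fin n)) :
    (JC a S).join (JC a T) = JC a (S ∪ T) := by
  apply Subtype.ext
  show (J a S ⊔ J a T).topologicalClosure = J a (S ∪ T)
  rw [← Submodule.orthogonal_orthogonal_eq_closure]
  exact J_join a S T

lemma JC_compl (a : Fin n → Submodule ℂ H) (ha : FamOK a) (S : Finset (Fin n)) :
    (JC a S).compl = JC a Sᶜ := Subtype.ext (J_compl a ha S)

lemma JC_bot (a : Fin n → Submodule ℂ H) : JC a ∅ = ClosedSubspace.bot :=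
  Subtype.ext (J_empty a)

lemma JC_top (a : Fin n → Submodule ℂ H) (ha : FamOK a) :
    JC a Finset.univ = ClosedSubspace.top := Subtype.ext (J_univ a ha)

lemma JC_singleton (a : Fin n → Submodule ℂ H) (ha : FamOK a) (i : Fin n) :
    JC a {i} = ⟨a i, ha.closed i⟩ := Subtype.ext (J_singleton a ha i)

lemma isBoolSub (a : Fin n → Submodule ℂ H) (ha : FamOK a) : IsBoolSub (Wf a) := by
  refine ⟨⟨∅, JC_bot a⟩, ⟨Finset.univ, JC_top a ha⟩, ?_, ?_, ?_, ?_⟩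
  · rintro x ⟨S, rfl⟩; exact ⟨Sᶜ, (JC_compl a ha S).symm⟩
  · rintro x ⟨S, rfl⟩ y ⟨T, rfl⟩; exact ⟨S ∩ T, (JC_meet a ha S T).symm⟩
  · rintro x ⟨S, rfl⟩ y ⟨T, rfl⟩; exact ⟨S ∪ T, (JC_join a S T).symm⟩
  · rintro x ⟨S, rfl⟩ y ⟨T, rfl⟩ z ⟨U, rfl⟩
    rw [JC_join, JC_meet a ha, JC_meet a ha, JC_meet a ha, JC_join]
    congr 1
    exact Finset.inter_union_distrib_left S T U

/-! ### The induced global valuation -/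

section Val

variable (v : ∀ W : Set (ClosedSubspace H), IsBoolSub W → ClosedSubspace H → Bool)
  (hhom : ∀ (W : Set (ClosedSubspace H)) (hW : IsBoolSub W), IsHomOn W (v W hW))
  (hagree : ∀ (W₁ W₂ : Set (ClosedSubspace H)) (h₁ : IsBoolSub W₁)
        (h₂ : IsBoolSub W₂) (x : ClosedSubspace H),
        x ∈ W₁ → x ∈ W₂ → v W₁ h₁ x = v W₂ h₂ x)

noncomputable def pairFam (x : ClosedSubspace H) : Fin 2 → Submodule ℂ H := ![x.1, x.1ᗮ]

lemma sup_fin2 (a : Fin 2 → Submodule ℂ H) : Finset.univ.sup a = a 0 ⊔ a 1 := by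
  rw [show (Finset.univ : Finset (Fin 2)) = {0, 1} from rfl, Finset.sup_insert,
    Finset.sup_singleton]

lemma pairFamOK (x : ClosedSubspace H) : FamOK (pairFam x) := by
  refine ⟨?_, ?_, ?_⟩
  · intro i; fin_cases i
    · exact x.2
    · exact Submodule.isClosed_orthogonal _
  · intro i j hij; fin_cases i <;> fin_cases j <;> simp_all [pairFam]
    · exact Submodule.le_orthogonal_orthogonal _
  · rw [sup_fin2]
    show (x.1 ⊔ x.1ᗮ)ᗮ = ⊥
    rw [← Submodule.inf_orthogonal, dorth_eq_self x.2, inf_comm]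
    exact Submodule.inf_orthogonal_eq_bot x.1

lemma mem_Wf_pair (x : ClosedSubspace H) : x ∈ Wf (pairFam x) :=
  ⟨{0}, by rw [JC_singleton _ (pairFamOK x) 0]; exact Subtype.ext rfl⟩

noncomputable def gval (x : ClosedSubspace H) : Bool :=
  v (Wf (pairFam x)) (isBoolSub _ (pairFamOK x)) x

include hagree in
lemma gval_eq (W' : Set (ClosedSubspace H)) (hW' : IsBoolSub W') (x : ClosedSubspace H)
    (hx : x ∈ W') : v W' hW' x = gval v x :=
  hagree _ _ _ _ x hx (mem_Wf_pair x)

include hhom hagree in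
lemma exactly_one (a : Fin n → Submodule ℂ H) (ha : FamOK a) :
    ∃! i : Fin n, gval v (⟨a i, ha.closed i⟩ : ClosedSubspace H) = true := by
  have hWa := isBoolSub a ha
  have hom := hhom (Wf a) hWa
  have hmono : ∀ S : Finset (Fin n), v (Wf a) hWa (JC a S) = true →
      ∃ i ∈ S, v (Wf a) hWa (JC a {i}) = true := by
    intro S
    induction S using Finset.induction_on with
    | empty =>
      intro h; rw [JC_bot a, hom.1] at h; cases h
    | @insert i S' hni ih =>
      intro h
      rw [Finset.insert_eq, ← JC_join] at h
      rw [hom.2.2.2.2 _ ⟨{i}, rfl⟩ _ ⟨S', rfl⟩] at h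
      rcases Bool.or_eq_true_iff.mp h with h1 | h2
      · exact ⟨i, Finset.mem_insert_self i S', h1⟩
      · obtain ⟨j, hj, hjt⟩ := ih h2
        exact ⟨j, Finset.mem_insert_of_mem hj, hjt⟩
  have htop : v (Wf a) hWa (JC a Finset.univ) = true := by
    rw [JC_top a ha]; exact hom.2.1
  obtain ⟨i0, _, hi0⟩ := hmono Finset.univ htop
  have huniq : ∀ i j : Fin n, i ≠ j → v (Wf a) hWa (JC a {i}) = true →
      v (Wf a) hWa (JC a {j}) = true → False := by
    intro i j hij hi hj
    have hmeet := hom.2.2.2.1 _ ⟨({i} : Finset (Fin n)), rfl⟩ _ ⟨({j} : Finset (Fin n)), rfl⟩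
    rw [JC_meet a ha, Finset.singleton_inter_of_notMem (by simpa using hij), JC_bot a,
      hom.1, hi, hj] at hmeet
    cases hmeet
  have hconv : ∀ i : Fin n, v (Wf a) hWa (JC a {i}) =
      gval v (⟨a i, ha.closed i⟩ : ClosedSubspace H) := by
    intro i
    rw [← JC_singleton a ha i]
    exact gval_eq v hagree _ hWa _ ⟨{i}, rfl⟩
  refine ⟨i0, ?_, ?_⟩
  · show gval v ⟨a i0, ha.closed i0⟩ = true
    rw [← hconv]; exact hi0
  · intro j hj
    have hj' : gval v (⟨a j, ha.closed j⟩ : ClosedSubspace H) = true := hj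
    by_contra hne
    exact huniq j i0 hne (by rw [hconv]; exact hj') hi0

end Val

-- ===== geometry =====
open Submodule Set
local notation "⟪" x ", " y "⟫" => @inner ℂ _ _ x y


noncomputable def ev (p : ℤ × ℤ) : ℝ := p.1 + p.2 * Real.sqrt 2

def zmul (p q : ℤ × ℤ) : ℤ × ℤ := (p.1 * q.1 + 2 * p.2 * q.2, p.1 * q.2 + p.2 * q.1)

def zdot (x y : Fin 3 → ℤ × ℤ) : ℤ × ℤ := zmul (x 0) (y 0) + zmul (x 1) (y 1) + zmul (x 2) (y 2)

lemma sqrt2_sq : Real.sqrt 2 * Real.sqrt 2 = 2 := Real.mul_self_sqrt (by norm_num)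

lemma ev_zmul (p q : ℤ × ℤ) : ev (zmul p q) = ev p * ev q := by
  simp only [ev, zmul]
  push_cast
  linear_combination (-(p.2 * q.2) : ℝ) * sqrt2_sq

lemma ev_add (p q : ℤ × ℤ) : ev (p + q) = ev p + ev q := by
  simp only [ev, Prod.fst_add, Prod.snd_add]; push_cast; ring

lemma ev_ne_zero {p : ℤ × ℤ} (hp : p ≠ 0) : ev p ≠ 0 := by
  rcases eq_or_ne p.2 0 with h2 | h2
  · have h1 : p.1 ≠ 0 := by
      intro h1; exact hp (Prod.ext h1 h2)
    simp [ev, h2]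
    exact_mod_cast h1
  · intro h
    rw [ev] at h
    have hp2 : (p.2 : ℝ) ≠ 0 := Int.cast_ne_zero.mpr h2
    have key : ((-p.1 / p.2 : ℚ) : ℝ) = Real.sqrt 2 := by
      push_cast
      field_simp
      linarith [h]
    exact irrational_sqrt_two ⟨_, key⟩

lemma ev_dot_eq (r s : Fin 3 → ℤ × ℤ) :
    ev (zdot r s) = ev (r 0) * ev (s 0) + ev (r 1) * ev (s 1) + ev (r 2) * ev (s 2) := by
  rw [zdot, ev_add, ev_add, ev_zmul, ev_zmul, ev_zmul]

variable {H : Type*} [NormedAddCommGroup H] [InnerProductSpace ℂ H] [CompleteSpace H]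

noncomputable def kvec (w : Fin 3 → H) (r : Fin 3 → ℤ × ℤ) : H :=
  ∑ k, ((ev (r k) : ℝ) : ℂ) • w k

lemma inner_kvec {w : Fin 3 → H} (hw : Orthonormal ℂ w) (r s : Fin 3 → ℤ × ℤ) :
    ⟪kvec w r, kvec w s⟫ = ((ev (zdot r s) : ℝ) : ℂ) := by
  rw [kvec, kvec, hw.inner_sum, ev_dot_eq]
  simp only [Fin.sum_univ_three, Complex.conj_ofReal]
  push_cast
  ring

lemma kvec_mem (w : Fin 3 → H) (r : Fin 3 → ℤ × ℤ) : kvec w r ∈ span ℂ (range w) :=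
  Submodule.sum_mem _ fun k _ => Submodule.smul_mem _ _ (subset_span ⟨k, rfl⟩)

lemma kvec_ne_zero {w : Fin 3 → H} (hw : Orthonormal ℂ w) {r : Fin 3 → ℤ × ℤ}
    (h : zdot r r ≠ 0) : kvec w r ≠ 0 := by
  intro h0
  have := inner_kvec hw r r
  rw [h0, inner_zero_left] at this
  exact ev_ne_zero h (by exact_mod_cast this.symm)

lemma span_eq_of_orth {w : Fin 3 → H} (hw : Orthonormal ℂ w) (u : Fin 3 → H)
    (hmem : ∀ k, u k ∈ span ℂ (range w))
    (horth : ∀ i j, i ≠ j → ⟪u i, u j⟫ = 0) (hnz : ∀ i, u i ≠ 0) :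
    span ℂ (range u) = span ℂ (range w) := by
  haveI : FiniteDimensional ℂ (span ℂ (range w)) :=
    FiniteDimensional.span_of_finite ℂ (finite_range w)
  have hli : LinearIndependent ℂ u := by
    rw [Fintype.linearIndependent_iff]
    intro g hg i
    have : ⟪u i, ∑ j, g j • u j⟫ = g i * ⟪u i, u i⟫ := by
      rw [inner_sum]
      rw [Finset.sum_eq_single i]
      · rw [inner_smul_right]
      · intro j _ hji
        rw [inner_smul_right, horth i j (Ne.symm hji), mul_zero]
      · intro hi; exact absurd (Finset.mem_univ i) hi
    rw [hg, inner_zero_right] at this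
    rcases mul_eq_zero.mp this.symm with h | h
    · exact h
    · exact absurd (inner_self_eq_zero.mp h) (hnz i)
  apply Submodule.eq_of_le_of_finrank_le
  · rw [Submodule.span_le]
    rintro x ⟨k, rfl⟩
    exact hmem k
  · rw [finrank_span_eq_card hli, finrank_span_eq_card hw.linearIndependent]


-- ===== abstract pair/triple lemmas =====

lemma orth_symm {A B : Submodule ℂ H} (h : A ≤ Bᗮ) : B ≤ Aᗮ :=
  (Submodule.le_orthogonal_orthogonal B).trans (Submodule.orthogonal_le h)

lemma sup_fin3 (a : Fin 3 → Submodule ℂ H) : Finset.univ.sup a = a 0 ⊔ (a 1 ⊔ a 2) := by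
  rw [show (Finset.univ : Finset (Fin 3)) = {0, 1, 2} from rfl, Finset.sup_insert,
    Finset.sup_insert, Finset.sup_singleton]

lemma sup_fin4 (a : Fin 4 → Submodule ℂ H) :
    Finset.univ.sup a = a 0 ⊔ (a 1 ⊔ (a 2 ⊔ a 3)) := by
  rw [show (Finset.univ : Finset (Fin 4)) = {0, 1, 2, 3} from rfl, Finset.sup_insert,
    Finset.sup_insert, Finset.sup_insert, Finset.sup_singleton]

lemma famOK3 {A B C : Submodule ℂ H} (hA : IsClosed (A : Set H)) (hB : IsClosed (B : Set H))
    (hC : IsClosed (C : Set H)) (hAB : A ≤ Bᗮ) (hAC : A ≤ Cᗮ) (hBC : B ≤ Cᗮ)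
    (hd : ((A ⊔ (B ⊔ C))ᗮ : Submodule ℂ H) = ⊥) : FamOK (![A, B, C]) := by
  refine ⟨?_, ?_, ?_⟩
  · intro i; fin_cases i <;> assumption
  · intro i j hij
    fin_cases i <;> fin_cases j <;>
      first
        | exact absurd rfl hij
        | exact hAB
        | exact hAC
        | exact hBC
        | exact orth_symm hAB
        | exact orth_symm hAC
        | exact orth_symm hBC
  · rw [sup_fin3]; exact hd

lemma famOK4 {A B C D : Submodule ℂ H} (hA : IsClosed (A : Set H)) (hB : IsClosed (B : Set H))
    (hC : IsClosed (C : Set H)) (hD : IsClosed (D : Set H))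
    (hAB : A ≤ Bᗮ) (hAC : A ≤ Cᗮ) (hAD : A ≤ Dᗮ) (hBC : B ≤ Cᗮ) (hBD : B ≤ Dᗮ) (hCD : C ≤ Dᗮ)
    (hd : ((A ⊔ (B ⊔ (C ⊔ D)))ᗮ : Submodule ℂ H) = ⊥) : FamOK (![A, B, C, D]) := by
  refine ⟨?_, ?_, ?_⟩
  · intro i; fin_cases i <;> assumption
  · intro i j hij
    fin_cases i <;> fin_cases j <;>
      first
        | exact absurd rfl hij
        | exact hAB
        | exact hAC
        | exact hAD
        | exact hBC
        | exact hBD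
        | exact hCD
        | exact orth_symm hAB
        | exact orth_symm hAC
        | exact orth_symm hAD
        | exact orth_symm hBC
        | exact orth_symm hBD
        | exact orth_symm hCD
  · rw [sup_fin4]; exact hd

section Val2

variable (v : ∀ W : Set (ClosedSubspace H), IsBoolSub W → ClosedSubspace H → Bool)
  (hhom : ∀ (W : Set (ClosedSubspace H)) (hW : IsBoolSub W), IsHomOn W (v W hW))
  (hagree : ∀ (W₁ W₂ : Set (ClosedSubspace H)) (h₁ : IsBoolSub W₁)
        (h₂ : IsBoolSub W₂) (x : ClosedSubspace H),
        x ∈ W₁ → x ∈ W₂ → v W₁ h₁ x = v W₂ h₂ x)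

include hhom hagree in
lemma g_pair {A B : Submodule ℂ H} (hA : IsClosed (A : Set H)) (hB : IsClosed (B : Set H))
    (hAB : A ≤ Bᗮ) : ¬(gval v ⟨A, hA⟩ = true ∧ gval v ⟨B, hB⟩ = true) := by
  rintro ⟨hgA, hgB⟩
  have hfam : FamOK (![A, B, (A ⊔ B)ᗮ]) :=
    famOK3 hA hB (Submodule.isClosed_orthogonal _) hAB
      (le_sup_left.trans (Submodule.le_orthogonal_orthogonal _))
      (le_sup_right.trans (Submodule.le_orthogonal_orthogonal _))
      (by rw [← sup_assoc, ← Submodule.inf_orthogonal]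
          exact Submodule.inf_orthogonal_eq_bot _)
  obtain ⟨i, hi, hu⟩ := exactly_one v hhom hagree _ hfam
  have e0 : (0 : Fin 3) = i := hu 0 hgA
  have e1 : (1 : Fin 3) = i := hu 1 hgB
  exact absurd (e0.trans e1.symm) (by decide)

include hhom hagree in
lemma g_triple {A B C : Submodule ℂ H} (hA : IsClosed (A : Set H)) (hB : IsClosed (B : Set H))
    (hC : IsClosed (C : Set H)) (hAB : A ≤ Bᗮ) (hAC : A ≤ Cᗮ) (hBC : B ≤ Cᗮ)
    (hd : ((A ⊔ (B ⊔ C))ᗮ : Submodule ℂ H) = ⊥) :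
    (gval v ⟨A, hA⟩ || gval v ⟨B, hB⟩ || gval v ⟨C, hC⟩) = true := by
  obtain ⟨i, hi, -⟩ := exactly_one v hhom hagree _ (famOK3 hA hB hC hAB hAC hBC hd)
  fin_cases i
  · have h : gval v ⟨A, hA⟩ = true := hi
    rw [h]; simp
  · have h : gval v ⟨B, hB⟩ = true := hi
    rw [h]; simp
  · have h : gval v ⟨C, hC⟩ = true := hi
    rw [h]; simp

include hhom hagree in
lemma g_triple_rel {A B C D : Submodule ℂ H} (hA : IsClosed (A : Set H))
    (hB : IsClosed (B : Set H)) (hC : IsClosed (C : Set H)) (hD : IsClosed (D : Set H))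
    (hAB : A ≤ Bᗮ) (hAC : A ≤ Cᗮ) (hAD : A ≤ Dᗮ) (hBC : B ≤ Cᗮ) (hBD : B ≤ Dᗮ) (hCD : C ≤ Dᗮ)
    (hd : ((A ⊔ (B ⊔ (C ⊔ D)))ᗮ : Submodule ℂ H) = ⊥)
    (hDf : gval v ⟨D, hD⟩ = false) :
    (gval v ⟨A, hA⟩ || gval v ⟨B, hB⟩ || gval v ⟨C, hC⟩) = true := by
  obtain ⟨i, hi, -⟩ :=
    exactly_one v hhom hagree _ (famOK4 hA hB hC hD hAB hAC hAD hBC hBD hCD hd)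
  fin_cases i
  · have h : gval v ⟨A, hA⟩ = true := hi
    rw [h]; simp
  · have h : gval v ⟨B, hB⟩ = true := hi
    rw [h]; simp
  · have h : gval v ⟨C, hC⟩ = true := hi
    rw [h]; simp
  · have h : gval v ⟨D, hD⟩ = true := hi
    rw [hDf] at h; cases h

end Val2

-- ===== helpers for both branches =====

lemma zdot_comm (x y : Fin 3 → ℤ × ℤ) : zdot x y = zdot y x := by
  simp only [zdot, zmul, Prod.mk_add_mk, Prod.mk.injEq]
  constructor <;> ring

lemma ev_zero : ev 0 = 0 := by simp [ev]

lemma span_singleton_closed (x : H) : IsClosed ((span ℂ {x} : Submodule ℂ H) : Set H) := by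
  haveI : FiniteDimensional ℂ (span ℂ ({x} : Set H)) :=
    FiniteDimensional.span_of_finite ℂ (Set.finite_singleton x)
  exact Submodule.closed_of_finiteDimensional _

lemma span_range_closed (w : Fin 3 → H) :
    IsClosed ((span ℂ (range w) : Submodule ℂ H) : Set H) := by
  haveI : FiniteDimensional ℂ (span ℂ (range w)) :=
    FiniteDimensional.span_of_finite ℂ (finite_range w)
  exact Submodule.closed_of_finiteDimensional _

lemma span_range3 (u : Fin 3 → H) :
    span ℂ (range u) = span ℂ {u 0} ⊔ (span ℂ {u 1} ⊔ span ℂ {u 2}) := by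
  rw [Submodule.span_range_eq_iSup, ← Finset.sup_univ_eq_iSup, sup_fin3]

lemma kvec_span_orth {w : Fin 3 → H} (hw : Orthonormal ℂ w) {r s : Fin 3 → ℤ × ℤ}
    (h : zdot r s = 0) : span ℂ {kvec w r} ≤ (span ℂ {kvec w s})ᗮ := by
  refine Submodule.isOrtho_iff_le.mp ?_
  rw [Submodule.isOrtho_span]
  rintro u (rfl : u = _) x (rfl : x = _)
  rw [inner_kvec hw, h, ev_zero]
  simp

lemma span_triple_eq {w : Fin 3 → H} (hw : Orthonormal ℂ w) {r1 r2 r3 : Fin 3 → ℤ × ℤ}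
    (h12 : zdot r1 r2 = 0) (h13 : zdot r1 r3 = 0) (h23 : zdot r2 r3 = 0)
    (hs1 : zdot r1 r1 ≠ 0) (hs2 : zdot r2 r2 ≠ 0) (hs3 : zdot r3 r3 ≠ 0) :
    span ℂ {kvec w r1} ⊔ (span ℂ {kvec w r2} ⊔ span ℂ {kvec w r3}) = span ℂ (range w) := by
  have hsr := span_range3 ![kvec w r1, kvec w r2, kvec w r3]
  rw [show (![kvec w r1, kvec w r2, kvec w r3] 0) = kvec w r1 from rfl,
      show (![kvec w r1, kvec w r2, kvec w r3] 1) = kvec w r2 from rfl,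
      show (![kvec w r1, kvec w r2, kvec w r3] 2) = kvec w r3 from rfl] at hsr
  rw [← hsr]
  apply span_eq_of_orth hw
  · intro k; fin_cases k <;> exact kvec_mem w _
  · intro i j hij
    have key : ∀ a b : Fin 3 → ℤ × ℤ, zdot a b = 0 →
        ⟪kvec w a, kvec w b⟫ = 0 := by
      intro a b hab; rw [inner_kvec hw, hab, ev_zero]; simp
    fin_cases i <;> fin_cases j <;>
      first
        | exact absurd rfl hij
        | exact key _ _ h12
        | exact key _ _ h13
        | exact key _ _ h23
        | exact key _ _ ((zdot_comm _ _).trans h12)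
        | exact key _ _ ((zdot_comm _ _).trans h13)
        | exact key _ _ ((zdot_comm _ _).trans h23)
  · intro i; fin_cases i <;> exact kvec_ne_zero hw ‹_›

lemma dense_with_rest {M A B C : Submodule ℂ H} (h : A ⊔ (B ⊔ C) = M) :
    ((A ⊔ (B ⊔ (C ⊔ Mᗮ)))ᗮ : Submodule ℂ H) = ⊥ := by
  have h2 : A ⊔ (B ⊔ (C ⊔ Mᗮ)) = M ⊔ Mᗮ := by
    rw [← h, sup_assoc, sup_assoc]
  rw [h2, ← Submodule.inf_orthogonal]
  exact Submodule.inf_orthogonal_eq_bot _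

-- ===== the finite-dimensional case =====

section Val3

variable (v : ∀ W : Set (ClosedSubspace H), IsBoolSub W → ClosedSubspace H → Bool)
  (hhom : ∀ (W : Set (ClosedSubspace H)) (hW : IsBoolSub W), IsHomOn W (v W hW))
  (hagree : ∀ (W₁ W₂ : Set (ClosedSubspace H)) (h₁ : IsBoolSub W₁)
        (h₂ : IsBoolSub W₂) (x : ClosedSubspace H),
        x ∈ W₁ → x ∈ W₂ → v W₁ h₁ x = v W₂ h₂ x)

include hhom hagree in
lemma exists_true_triple_space [FiniteDimensional ℂ H] (hdim : 3 ≤ Module.finrank ℂ H) :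
    ∃ w : Fin 3 → H, Orthonormal ℂ w ∧
      gval v ⟨span ℂ {w 0}, span_singleton_closed _⟩ = true ∧
      gval v ⟨(span ℂ (range w))ᗮ, Submodule.isClosed_orthogonal _⟩ = false := by
  classical
  let b := stdOrthonormalBasis ℂ H
  let lines : Fin (Module.finrank ℂ H) → Submodule ℂ H := fun i => span ℂ {b i}
  have hlOK : FamOK lines := by
    refine ⟨fun i => span_singleton_closed _, ?_, ?_⟩
    · intro i j hij
      refine Submodule.isOrtho_iff_le.mp ?_
      rw [Submodule.isOrtho_span]
      rintro u (rfl : u = _) x (rfl : x = _)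
      exact b.orthonormal.2 hij
    · rw [Finset.sup_univ_eq_iSup, ← Submodule.span_range_eq_iSup,
        show range ⇑b = range ⇑b.toBasis by simp, b.toBasis.span_eq]
      exact Submodule.top_orthogonal_eq_bot
  obtain ⟨i0, hi0, hu0⟩ := exactly_one v hhom hagree lines hlOK
  have hcard : 1 < ({i0}ᶜ : Finset (Fin (Module.finrank ℂ H))).card := by
    rw [Finset.card_compl]
    simp only [Finset.card_singleton, Fintype.card_fin]
    omega
  obtain ⟨j, hj, k, hk, hjk⟩ := Finset.one_lt_card.mp hcard
  have hji0 : j ≠ i0 := by simpa using hj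
  have hki0 : k ≠ i0 := by simpa using hk
  have hfinj : Function.Injective (![i0, j, k] : Fin 3 → Fin (Module.finrank ℂ H)) := by
    intro a c hac
    fin_cases a <;> fin_cases c <;>
      simp only [Matrix.cons_val_zero, Matrix.cons_val_one, Matrix.head_cons,
        Matrix.cons_val_two, Matrix.tail_cons, Fin.mk_zero, Fin.mk_one] at hac <;>
      first
        | rfl
        | exact absurd hac (Ne.symm hji0)
        | exact absurd hac (Ne.symm hki0)
        | exact absurd hac (Ne.symm hjk)
        | exact absurd hac hji0
        | exact absurd hac hki0
        | exact absurd hac hjk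
  set w : Fin 3 → H := ⇑b ∘ ![i0, j, k] with hwdef
  have hw : Orthonormal ℂ w := b.orthonormal.comp _ hfinj
  refine ⟨w, hw, ?_, ?_⟩
  · exact hi0
  · -- the complement of the span of w is false
    set M : Submodule ℂ H := span ℂ (range w) with hMdef
    have hMc : IsClosed (M : Set H) := span_range_closed w
    have hkey : ∀ a c : Fin 3, a ≠ c → span ℂ {w a} ≤ (span ℂ {w c})ᗮ := by
      intro a c hac
      refine Submodule.isOrtho_iff_le.mp ?_
      rw [Submodule.isOrtho_span]
      rintro u (rfl : u = _) x (rfl : x = _)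
      exact hw.2 hac
    have hmemM : ∀ a : Fin 3, span ℂ {w a} ≤ M :=
      fun a => Submodule.span_mono (Set.singleton_subset_iff.mpr ⟨a, rfl⟩)
    have hfam : FamOK (![span ℂ {w 0}, span ℂ {w 1}, span ℂ {w 2}, Mᗮ]) := by
      refine famOK4 (span_singleton_closed _) (span_singleton_closed _)
        (span_singleton_closed _) (Submodule.isClosed_orthogonal _)
        (hkey 0 1 (by decide)) (hkey 0 2 (by decide))
        ((hmemM 0).trans (Submodule.le_orthogonal_orthogonal _))
        (hkey 1 2 (by decide))
        ((hmemM 1).trans (Submodule.le_orthogonal_orthogonal _))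
        ((hmemM 2).trans (Submodule.le_orthogonal_orthogonal _))
        (dense_with_rest (span_range3 w).symm)
    obtain ⟨i, hi, hu⟩ := exactly_one v hhom hagree _ hfam
    have e0 : (0 : Fin 4) = i := hu 0 hi0
    cases hD : gval v ⟨Mᗮ, Submodule.isClosed_orthogonal M⟩
    · rfl
    · have e3 : (3 : Fin 4) = i := hu 3 hD
      exact absurd (e0.trans e3.symm) (by decide)

end Val3

-- ===== KS configuration and core =====

def co : ℕ → Fin 3 → ℤ × ℤ
  | 0 => ![(0, 0), (0, 0), (1, 0)]
  | 1 => ![(0, 0), (1, 0), (0, 0)]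
  | 2 => ![(0, 0), (1, 0), (1, 0)]
  | 3 => ![(0, 0), (1, 0), (-1, 0)]
  | 4 => ![(0, 0), (1, 0), (0, 1)]
  | 5 => ![(0, 0), (1, 0), (0, -1)]
  | 6 => ![(0, 0), (0, 1), (1, 0)]
  | 7 => ![(0, 0), (0, 1), (-1, 0)]
  | 8 => ![(1, 0), (0, 0), (0, 0)]
  | 9 => ![(1, 0), (0, 0), (1, 0)]
  | 10 => ![(1, 0), (0, 0), (-1, 0)]
  | 11 => ![(1, 0), (0, 0), (0, 1)]
  | 12 => ![(1, 0), (0, 0), (0, -1)]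
  | 13 => ![(1, 0), (1, 0), (0, 0)]
  | 14 => ![(1, 0), (1, 0), (1, 0)]
  | 15 => ![(1, 0), (1, 0), (-1, 0)]
  | 16 => ![(1, 0), (1, 0), (0, 1)]
  | 17 => ![(1, 0), (1, 0), (0, -1)]
  | 18 => ![(1, 0), (-1, 0), (0, 0)]
  | 19 => ![(1, 0), (-1, 0), (1, 0)]
  | 20 => ![(1, 0), (-1, 0), (-1, 0)]
  | 21 => ![(1, 0), (-1, 0), (0, 1)]
  | 22 => ![(1, 0), (-1, 0), (0, -1)]
  | 23 => ![(1, 0), (0, 1), (0, 0)]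
  | 24 => ![(1, 0), (0, 1), (1, 0)]
  | 25 => ![(1, 0), (0, 1), (-1, 0)]
  | 26 => ![(1, 0), (0, 1), (0, 1)]
  | 27 => ![(1, 0), (0, 1), (0, -1)]
  | 28 => ![(1, 0), (0, -1), (0, 0)]
  | 29 => ![(1, 0), (0, -1), (1, 0)]
  | 30 => ![(1, 0), (0, -1), (-1, 0)]
  | 31 => ![(1, 0), (0, -1), (0, 1)]
  | 32 => ![(1, 0), (0, -1), (0, -1)]
  | 33 => ![(0, 1), (0, 0), (1, 0)]
  | 34 => ![(0, 1), (0, 0), (-1, 0)]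
  | 35 => ![(0, 1), (1, 0), (0, 0)]
  | 36 => ![(0, 1), (1, 0), (1, 0)]
  | 37 => ![(0, 1), (1, 0), (-1, 0)]
  | 38 => ![(0, 1), (1, 0), (0, 1)]
  | 39 => ![(0, 1), (1, 0), (0, -1)]
  | 40 => ![(0, 1), (-1, 0), (0, 0)]
  | 41 => ![(0, 1), (-1, 0), (1, 0)]
  | 42 => ![(0, 1), (-1, 0), (-1, 0)]
  | 43 => ![(0, 1), (-1, 0), (0, 1)]
  | 44 => ![(0, 1), (-1, 0), (0, -1)]
  | 45 => ![(0, 1), (0, 1), (1, 0)]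
  | 46 => ![(0, 1), (0, 1), (-1, 0)]
  | 47 => ![(0, 1), (0, -1), (1, 0)]
  | 48 => ![(0, 1), (0, -1), (-1, 0)]
  | _ => ![(0,0),(0,0),(0,0)]

def kscoord : Fin 49 → Fin 3 → ℤ × ℤ := fun i => co i.val


lemma edge_prop {b1 b2 : Bool} (h : ¬(b1 = true ∧ b2 = true)) (h1 : b1 = true) : b2 = false := by
  cases b2
  · rfl
  · exact absurd ⟨h1, rfl⟩ h

lemma edge_prop' {b1 b2 : Bool} (h : ¬(b1 = true ∧ b2 = true)) (h2 : b2 = true) : b1 = false := by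
  cases b1
  · rfl
  · exact absurd ⟨rfl, h2⟩ h

lemma trip1 {b1 b2 b3 : Bool} (h : (b1 || b2 || b3) = true) (h2 : b2 = false) (h3 : b3 = false) :
    b1 = true := by subst h2; subst h3; simpa using h

lemma trip2 {b1 b2 b3 : Bool} (h : (b1 || b2 || b3) = true) (h1 : b1 = false) (h3 : b3 = false) :
    b2 = true := by subst h1; subst h3; simpa using h

lemma trip3 {b1 b2 b3 : Bool} (h : (b1 || b2 || b3) = true) (h1 : b1 = false) (h2 : b2 = false) :
    b3 = true := by subst h1; subst h2; simpa using h

lemma trip0 {b1 b2 b3 : Bool} (h : (b1 || b2 || b3) = true) (h1 : b1 = false) (h2 : b2 = false)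
    (h3 : b3 = false) : False := by subst h1; subst h2; subst h3; simp at h

theorem ks_core (c : Fin 49 → Bool)
    (he : ∀ i j : Fin 49, zdot (kscoord i) (kscoord j) = 0 → ¬(c i = true ∧ c j = true))
    (ht : ∀ i j k : Fin 49, zdot (kscoord i) (kscoord j) = 0 → zdot (kscoord i) (kscoord k) = 0 →
      zdot (kscoord j) (kscoord k) = 0 → (c i || c j || c k) = true) : False := by
  rcases Bool.eq_false_or_eq_true (c 0) with h0_0 | h0_0
  · -- c 0 = true
    have h1_1 : c 1 = false := edge_prop (he 0 1 (by decide)) h0_0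
    have h8_2 : c 8 = false := edge_prop (he 0 8 (by decide)) h0_0
    have h13_3 : c 13 = false := edge_prop (he 0 13 (by decide)) h0_0
    have h18_4 : c 18 = false := edge_prop (he 0 18 (by decide)) h0_0
    have h23_5 : c 23 = false := edge_prop (he 0 23 (by decide)) h0_0
    have h28_6 : c 28 = false := edge_prop (he 0 28 (by decide)) h0_0
    have h35_7 : c 35 = false := edge_prop (he 0 35 (by decide)) h0_0
    have h40_8 : c 40 = false := edge_prop (he 0 40 (by decide)) h0_0
    rcases Bool.eq_false_or_eq_true (c 9) with h9_9 | h9_9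
    · -- c 9 = true
      have h10_10 : c 10 = false := edge_prop (he 9 10 (by decide)) h9_9
      have h15_11 : c 15 = false := edge_prop (he 9 15 (by decide)) h9_9
      have h20_12 : c 20 = false := edge_prop (he 9 20 (by decide)) h9_9
      have h25_13 : c 25 = false := edge_prop (he 9 25 (by decide)) h9_9
      have h30_14 : c 30 = false := edge_prop (he 9 30 (by decide)) h9_9
      have h39_15 : c 39 = false := edge_prop (he 9 39 (by decide)) h9_9
      have h44_16 : c 44 = false := edge_prop (he 9 44 (by decide)) h9_9
      rcases Bool.eq_false_or_eq_true (c 11) with h11_17 | h11_17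
      · -- c 11 = true
        have h34_18 : c 34 = false := edge_prop (he 11 34 (by decide)) h11_17
        have h37_19 : c 37 = false := edge_prop (he 11 37 (by decide)) h11_17
        have h42_20 : c 42 = false := edge_prop (he 11 42 (by decide)) h11_17
        have h46_21 : c 46 = false := edge_prop (he 11 46 (by decide)) h11_17
        have h48_22 : c 48 = false := edge_prop (he 11 48 (by decide)) h11_17
        rcases Bool.eq_false_or_eq_true (c 12) with h12_23 | h12_23
        · -- c 12 = true
          have h33_24 : c 33 = false := edge_prop (he 12 33 (by decide)) h12_23
          have h36_25 : c 36 = false := edge_prop (he 12 36 (by decide)) h12_23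
          have h41_26 : c 41 = false := edge_prop (he 12 41 (by decide)) h12_23
          have h45_27 : c 45 = false := edge_prop (he 12 45 (by decide)) h12_23
          have h47_28 : c 47 = false := edge_prop (he 12 47 (by decide)) h12_23
          have h2_29 : c 2 = true := trip1 (ht 2 37 41 (by decide) (by decide) (by decide)) h37_19 h41_26
          have h3_30 : c 3 = false := edge_prop (he 2 3 (by decide)) h2_29
          exact trip0 (ht 3 36 42 (by decide) (by decide) (by decide)) h3_30 h36_25 h42_20
        · -- c 12 = false
          have h33_31 : c 33 = true := trip3 (ht 1 12 33 (by decide) (by decide) (by decide)) h1_1 h12_23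
          have h17_32 : c 17 = false := edge_prop' (he 17 33 (by decide)) h33_31
          have h22_33 : c 22 = false := edge_prop' (he 22 33 (by decide)) h33_31
          have h27_34 : c 27 = false := edge_prop' (he 27 33 (by decide)) h33_31
          have h32_35 : c 32 = false := edge_prop' (he 32 33 (by decide)) h33_31
          have h21_36 : c 21 = true := trip2 (ht 13 21 22 (by decide) (by decide) (by decide)) h13_3 h22_33
          have h6_37 : c 6 = false := edge_prop' (he 6 21 (by decide)) h21_36
          have h5_38 : c 5 = true := trip1 (ht 5 6 8 (by decide) (by decide) (by decide)) h6_37 h8_2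
          have h24_39 : c 24 = false := edge_prop (he 5 24 (by decide)) h5_38
          have h45_40 : c 45 = false := edge_prop (he 5 45 (by decide)) h5_38
          have h29_41 : c 29 = true := trip3 (ht 10 24 29 (by decide) (by decide) (by decide)) h10_10 h24_39
          have h4_42 : c 4 = false := edge_prop' (he 4 29 (by decide)) h29_41
          have h7_43 : c 7 = true := trip2 (ht 4 7 8 (by decide) (by decide) (by decide)) h4_42 h8_2
          have h16_44 : c 16 = false := edge_prop (he 7 16 (by decide)) h7_43
          exact trip0 (ht 16 17 18 (by decide) (by decide) (by decide)) h16_44 h17_32 h18_4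
      · -- c 11 = false
        have h34_45 : c 34 = true := trip3 (ht 1 11 34 (by decide) (by decide) (by decide)) h1_1 h11_17
        have h16_46 : c 16 = false := edge_prop' (he 16 34 (by decide)) h34_45
        have h21_47 : c 21 = false := edge_prop' (he 21 34 (by decide)) h34_45
        have h26_48 : c 26 = false := edge_prop' (he 26 34 (by decide)) h34_45
        have h31_49 : c 31 = false := edge_prop' (he 31 34 (by decide)) h34_45
        have h22_50 : c 22 = true := trip3 (ht 13 21 22 (by decide) (by decide) (by decide)) h13_3 h21_47
        have h7_51 : c 7 = false := edge_prop' (he 7 22 (by decide)) h22_50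
        have h33_52 : c 33 = false := edge_prop (he 22 33 (by decide)) h22_50
        have h12_53 : c 12 = true := trip2 (ht 1 12 33 (by decide) (by decide) (by decide)) h1_1 h33_52
        have h36_54 : c 36 = false := edge_prop (he 12 36 (by decide)) h12_53
        have h41_55 : c 41 = false := edge_prop (he 12 41 (by decide)) h12_53
        have h45_56 : c 45 = false := edge_prop (he 12 45 (by decide)) h12_53
        have h47_57 : c 47 = false := edge_prop (he 12 47 (by decide)) h12_53
        have h4_58 : c 4 = true := trip1 (ht 4 7 8 (by decide) (by decide) (by decide)) h7_51 h8_2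
        have h29_59 : c 29 = false := edge_prop (he 4 29 (by decide)) h4_58
        have h46_60 : c 46 = false := edge_prop (he 4 46 (by decide)) h4_58
        have h24_61 : c 24 = true := trip2 (ht 10 24 29 (by decide) (by decide) (by decide)) h10_10 h29_59
        have h5_62 : c 5 = false := edge_prop' (he 5 24 (by decide)) h24_61
        have h6_63 : c 6 = true := trip2 (ht 5 6 8 (by decide) (by decide) (by decide)) h5_62 h8_2
        have h17_64 : c 17 = false := edge_prop (he 6 17 (by decide)) h6_63
        exact trip0 (ht 16 17 18 (by decide) (by decide) (by decide)) h16_46 h17_64 h18_4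
    · -- c 9 = false
      have h10_65 : c 10 = true := trip3 (ht 1 9 10 (by decide) (by decide) (by decide)) h1_1 h9_9
      have h14_66 : c 14 = false := edge_prop (he 10 14 (by decide)) h10_65
      have h19_67 : c 19 = false := edge_prop (he 10 19 (by decide)) h10_65
      have h24_68 : c 24 = false := edge_prop (he 10 24 (by decide)) h10_65
      have h29_69 : c 29 = false := edge_prop (he 10 29 (by decide)) h10_65
      have h38_70 : c 38 = false := edge_prop (he 10 38 (by decide)) h10_65
      have h43_71 : c 43 = false := edge_prop (he 10 43 (by decide)) h10_65
      rcases Bool.eq_false_or_eq_true (c 11) with h11_72 | h11_72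
      · -- c 11 = true
        have h34_73 : c 34 = false := edge_prop (he 11 34 (by decide)) h11_72
        have h37_74 : c 37 = false := edge_prop (he 11 37 (by decide)) h11_72
        have h42_75 : c 42 = false := edge_prop (he 11 42 (by decide)) h11_72
        have h46_76 : c 46 = false := edge_prop (he 11 46 (by decide)) h11_72
        have h48_77 : c 48 = false := edge_prop (he 11 48 (by decide)) h11_72
        rcases Bool.eq_false_or_eq_true (c 12) with h12_78 | h12_78
        · -- c 12 = true
          have h33_79 : c 33 = false := edge_prop (he 12 33 (by decide)) h12_78
          have h36_80 : c 36 = false := edge_prop (he 12 36 (by decide)) h12_78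
          have h41_81 : c 41 = false := edge_prop (he 12 41 (by decide)) h12_78
          have h45_82 : c 45 = false := edge_prop (he 12 45 (by decide)) h12_78
          have h47_83 : c 47 = false := edge_prop (he 12 47 (by decide)) h12_78
          have h2_84 : c 2 = true := trip1 (ht 2 37 41 (by decide) (by decide) (by decide)) h37_74 h41_81
          have h3_85 : c 3 = false := edge_prop (he 2 3 (by decide)) h2_84
          exact trip0 (ht 3 36 42 (by decide) (by decide) (by decide)) h3_85 h36_80 h42_75
        · -- c 12 = false
          have h33_86 : c 33 = true := trip3 (ht 1 12 33 (by decide) (by decide) (by decide)) h1_1 h12_78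
          have h17_87 : c 17 = false := edge_prop' (he 17 33 (by decide)) h33_86
          have h22_88 : c 22 = false := edge_prop' (he 22 33 (by decide)) h33_86
          have h27_89 : c 27 = false := edge_prop' (he 27 33 (by decide)) h33_86
          have h32_90 : c 32 = false := edge_prop' (he 32 33 (by decide)) h33_86
          have h21_91 : c 21 = true := trip2 (ht 13 21 22 (by decide) (by decide) (by decide)) h13_3 h22_88
          have h6_92 : c 6 = false := edge_prop' (he 6 21 (by decide)) h21_91
          have h5_93 : c 5 = true := trip1 (ht 5 6 8 (by decide) (by decide) (by decide)) h6_92 h8_2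
          have h30_94 : c 30 = false := edge_prop (he 5 30 (by decide)) h5_93
          have h45_95 : c 45 = false := edge_prop (he 5 45 (by decide)) h5_93
          have h25_96 : c 25 = true := trip2 (ht 9 25 30 (by decide) (by decide) (by decide)) h9_9 h30_94
          have h4_97 : c 4 = false := edge_prop' (he 4 25 (by decide)) h25_96
          have h7_98 : c 7 = true := trip2 (ht 4 7 8 (by decide) (by decide) (by decide)) h4_97 h8_2
          have h16_99 : c 16 = false := edge_prop (he 7 16 (by decide)) h7_98
          exact trip0 (ht 16 17 18 (by decide) (by decide) (by decide)) h16_99 h17_87 h18_4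
      · -- c 11 = false
        have h34_100 : c 34 = true := trip3 (ht 1 11 34 (by decide) (by decide) (by decide)) h1_1 h11_72
        have h16_101 : c 16 = false := edge_prop' (he 16 34 (by decide)) h34_100
        have h21_102 : c 21 = false := edge_prop' (he 21 34 (by decide)) h34_100
        have h26_103 : c 26 = false := edge_prop' (he 26 34 (by decide)) h34_100
        have h31_104 : c 31 = false := edge_prop' (he 31 34 (by decide)) h34_100
        have h22_105 : c 22 = true := trip3 (ht 13 21 22 (by decide) (by decide) (by decide)) h13_3 h21_102
        have h7_106 : c 7 = false := edge_prop' (he 7 22 (by decide)) h22_105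
        have h33_107 : c 33 = false := edge_prop (he 22 33 (by decide)) h22_105
        have h12_108 : c 12 = true := trip2 (ht 1 12 33 (by decide) (by decide) (by decide)) h1_1 h33_107
        have h36_109 : c 36 = false := edge_prop (he 12 36 (by decide)) h12_108
        have h41_110 : c 41 = false := edge_prop (he 12 41 (by decide)) h12_108
        have h45_111 : c 45 = false := edge_prop (he 12 45 (by decide)) h12_108
        have h47_112 : c 47 = false := edge_prop (he 12 47 (by decide)) h12_108
        have h4_113 : c 4 = true := trip1 (ht 4 7 8 (by decide) (by decide) (by decide)) h7_106 h8_2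
        have h25_114 : c 25 = false := edge_prop (he 4 25 (by decide)) h4_113
        have h46_115 : c 46 = false := edge_prop (he 4 46 (by decide)) h4_113
        have h30_116 : c 30 = true := trip3 (ht 9 25 30 (by decide) (by decide) (by decide)) h9_9 h25_114
        have h5_117 : c 5 = false := edge_prop' (he 5 30 (by decide)) h30_116
        have h6_118 : c 6 = true := trip2 (ht 5 6 8 (by decide) (by decide) (by decide)) h5_117 h8_2
        have h17_119 : c 17 = false := edge_prop (he 6 17 (by decide)) h6_118
        exact trip0 (ht 16 17 18 (by decide) (by decide) (by decide)) h16_101 h17_119 h18_4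
  · -- c 0 = false
    rcases Bool.eq_false_or_eq_true (c 1) with h1_120 | h1_120
    · -- c 1 = true
      have h8_121 : c 8 = false := edge_prop (he 1 8 (by decide)) h1_120
      have h9_122 : c 9 = false := edge_prop (he 1 9 (by decide)) h1_120
      have h10_123 : c 10 = false := edge_prop (he 1 10 (by decide)) h1_120
      have h11_124 : c 11 = false := edge_prop (he 1 11 (by decide)) h1_120
      have h12_125 : c 12 = false := edge_prop (he 1 12 (by decide)) h1_120
      have h33_126 : c 33 = false := edge_prop (he 1 33 (by decide)) h1_120
      have h34_127 : c 34 = false := edge_prop (he 1 34 (by decide)) h1_120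
      rcases Bool.eq_false_or_eq_true (c 13) with h13_128 | h13_128
      · -- c 13 = true
        have h18_129 : c 18 = false := edge_prop (he 13 18 (by decide)) h13_128
        have h19_130 : c 19 = false := edge_prop (he 13 19 (by decide)) h13_128
        have h20_131 : c 20 = false := edge_prop (he 13 20 (by decide)) h13_128
        have h21_132 : c 21 = false := edge_prop (he 13 21 (by decide)) h13_128
        have h22_133 : c 22 = false := edge_prop (he 13 22 (by decide)) h13_128
        have h47_134 : c 47 = false := edge_prop (he 13 47 (by decide)) h13_128
        have h48_135 : c 48 = false := edge_prop (he 13 48 (by decide)) h13_128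
        rcases Bool.eq_false_or_eq_true (c 23) with h23_136 | h23_136
        · -- c 23 = true
          have h40_137 : c 40 = false := edge_prop (he 23 40 (by decide)) h23_136
          have h41_138 : c 41 = false := edge_prop (he 23 41 (by decide)) h23_136
          have h42_139 : c 42 = false := edge_prop (he 23 42 (by decide)) h23_136
          have h43_140 : c 43 = false := edge_prop (he 23 43 (by decide)) h23_136
          have h44_141 : c 44 = false := edge_prop (he 23 44 (by decide)) h23_136
          rcases Bool.eq_false_or_eq_true (c 28) with h28_142 | h28_142
          · -- c 28 = true
            have h35_143 : c 35 = false := edge_prop (he 28 35 (by decide)) h28_142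
            have h36_144 : c 36 = false := edge_prop (he 28 36 (by decide)) h28_142
            have h37_145 : c 37 = false := edge_prop (he 28 37 (by decide)) h28_142
            have h38_146 : c 38 = false := edge_prop (he 28 38 (by decide)) h28_142
            have h39_147 : c 39 = false := edge_prop (he 28 39 (by decide)) h28_142
            have h2_148 : c 2 = true := trip1 (ht 2 37 41 (by decide) (by decide) (by decide)) h37_145 h41_138
            have h3_149 : c 3 = false := edge_prop (he 2 3 (by decide)) h2_148
            exact trip0 (ht 3 36 42 (by decide) (by decide) (by decide)) h3_149 h36_144 h42_139
          · -- c 28 = false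
            have h35_150 : c 35 = true := trip3 (ht 0 28 35 (by decide) (by decide) (by decide)) h0_0 h28_142
            have h29_151 : c 29 = false := edge_prop' (he 29 35 (by decide)) h35_150
            have h30_152 : c 30 = false := edge_prop' (he 30 35 (by decide)) h35_150
            have h31_153 : c 31 = false := edge_prop' (he 31 35 (by decide)) h35_150
            have h32_154 : c 32 = false := edge_prop' (he 32 35 (by decide)) h35_150
            have h25_155 : c 25 = true := trip2 (ht 9 25 30 (by decide) (by decide) (by decide)) h9_122 h30_152
            have h4_156 : c 4 = false := edge_prop' (he 4 25 (by decide)) h25_155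
            have h7_157 : c 7 = true := trip2 (ht 4 7 8 (by decide) (by decide) (by decide)) h4_156 h8_121
            have h16_158 : c 16 = false := edge_prop (he 7 16 (by decide)) h7_157
            have h38_159 : c 38 = false := edge_prop (he 7 38 (by decide)) h7_157
            have h24_160 : c 24 = true := trip2 (ht 10 24 29 (by decide) (by decide) (by decide)) h10_123 h29_151
            have h5_161 : c 5 = false := edge_prop' (he 5 24 (by decide)) h24_160
            have h6_162 : c 6 = true := trip2 (ht 5 6 8 (by decide) (by decide) (by decide)) h5_161 h8_121
            have h17_163 : c 17 = false := edge_prop (he 6 17 (by decide)) h6_162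
            exact trip0 (ht 16 17 18 (by decide) (by decide) (by decide)) h16_158 h17_163 h18_129
        · -- c 23 = false
          have h40_164 : c 40 = true := trip3 (ht 0 23 40 (by decide) (by decide) (by decide)) h0_0 h23_136
          have h24_165 : c 24 = false := edge_prop' (he 24 40 (by decide)) h40_164
          have h25_166 : c 25 = false := edge_prop' (he 25 40 (by decide)) h40_164
          have h26_167 : c 26 = false := edge_prop' (he 26 40 (by decide)) h40_164
          have h27_168 : c 27 = false := edge_prop' (he 27 40 (by decide)) h40_164
          have h30_169 : c 30 = true := trip3 (ht 9 25 30 (by decide) (by decide) (by decide)) h9_122 h25_166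
          have h5_170 : c 5 = false := edge_prop' (he 5 30 (by decide)) h30_169
          have h35_171 : c 35 = false := edge_prop (he 30 35 (by decide)) h30_169
          have h28_172 : c 28 = true := trip2 (ht 0 28 35 (by decide) (by decide) (by decide)) h0_0 h35_171
          have h36_173 : c 36 = false := edge_prop (he 28 36 (by decide)) h28_172
          have h37_174 : c 37 = false := edge_prop (he 28 37 (by decide)) h28_172
          have h38_175 : c 38 = false := edge_prop (he 28 38 (by decide)) h28_172
          have h39_176 : c 39 = false := edge_prop (he 28 39 (by decide)) h28_172
          have h6_177 : c 6 = true := trip2 (ht 5 6 8 (by decide) (by decide) (by decide)) h5_170 h8_121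
          have h17_178 : c 17 = false := edge_prop (he 6 17 (by decide)) h6_177
          have h43_179 : c 43 = false := edge_prop (he 6 43 (by decide)) h6_177
          have h29_180 : c 29 = true := trip3 (ht 10 24 29 (by decide) (by decide) (by decide)) h10_123 h24_165
          have h4_181 : c 4 = false := edge_prop' (he 4 29 (by decide)) h29_180
          have h7_182 : c 7 = true := trip2 (ht 4 7 8 (by decide) (by decide) (by decide)) h4_181 h8_121
          have h16_183 : c 16 = false := edge_prop (he 7 16 (by decide)) h7_182
          exact trip0 (ht 16 17 18 (by decide) (by decide) (by decide)) h16_183 h17_178 h18_129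
      · -- c 13 = false
        have h18_184 : c 18 = true := trip3 (ht 0 13 18 (by decide) (by decide) (by decide)) h0_0 h13_128
        have h14_185 : c 14 = false := edge_prop' (he 14 18 (by decide)) h18_184
        have h15_186 : c 15 = false := edge_prop' (he 15 18 (by decide)) h18_184
        have h16_187 : c 16 = false := edge_prop' (he 16 18 (by decide)) h18_184
        have h17_188 : c 17 = false := edge_prop' (he 17 18 (by decide)) h18_184
        have h45_189 : c 45 = false := edge_prop (he 18 45 (by decide)) h18_184
        have h46_190 : c 46 = false := edge_prop (he 18 46 (by decide)) h18_184
        rcases Bool.eq_false_or_eq_true (c 23) with h23_191 | h23_191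
        · -- c 23 = true
          have h40_192 : c 40 = false := edge_prop (he 23 40 (by decide)) h23_191
          have h41_193 : c 41 = false := edge_prop (he 23 41 (by decide)) h23_191
          have h42_194 : c 42 = false := edge_prop (he 23 42 (by decide)) h23_191
          have h43_195 : c 43 = false := edge_prop (he 23 43 (by decide)) h23_191
          have h44_196 : c 44 = false := edge_prop (he 23 44 (by decide)) h23_191
          rcases Bool.eq_false_or_eq_true (c 28) with h28_197 | h28_197
          · -- c 28 = true
            have h35_198 : c 35 = false := edge_prop (he 28 35 (by decide)) h28_197
            have h36_199 : c 36 = false := edge_prop (he 28 36 (by decide)) h28_197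
            have h37_200 : c 37 = false := edge_prop (he 28 37 (by decide)) h28_197
            have h38_201 : c 38 = false := edge_prop (he 28 38 (by decide)) h28_197
            have h39_202 : c 39 = false := edge_prop (he 28 39 (by decide)) h28_197
            have h2_203 : c 2 = true := trip1 (ht 2 37 41 (by decide) (by decide) (by decide)) h37_200 h41_193
            have h3_204 : c 3 = false := edge_prop (he 2 3 (by decide)) h2_203
            exact trip0 (ht 3 36 42 (by decide) (by decide) (by decide)) h3_204 h36_199 h42_194
          · -- c 28 = false
            have h35_205 : c 35 = true := trip3 (ht 0 28 35 (by decide) (by decide) (by decide)) h0_0 h28_197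
            have h29_206 : c 29 = false := edge_prop' (he 29 35 (by decide)) h35_205
            have h30_207 : c 30 = false := edge_prop' (he 30 35 (by decide)) h35_205
            have h31_208 : c 31 = false := edge_prop' (he 31 35 (by decide)) h35_205
            have h32_209 : c 32 = false := edge_prop' (he 32 35 (by decide)) h35_205
            have h25_210 : c 25 = true := trip2 (ht 9 25 30 (by decide) (by decide) (by decide)) h9_122 h30_207
            have h4_211 : c 4 = false := edge_prop' (he 4 25 (by decide)) h25_210
            have h7_212 : c 7 = true := trip2 (ht 4 7 8 (by decide) (by decide) (by decide)) h4_211 h8_121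
            have h22_213 : c 22 = false := edge_prop (he 7 22 (by decide)) h7_212
            have h38_214 : c 38 = false := edge_prop (he 7 38 (by decide)) h7_212
            have h24_215 : c 24 = true := trip2 (ht 10 24 29 (by decide) (by decide) (by decide)) h10_123 h29_206
            have h5_216 : c 5 = false := edge_prop' (he 5 24 (by decide)) h24_215
            have h6_217 : c 6 = true := trip2 (ht 5 6 8 (by decide) (by decide) (by decide)) h5_216 h8_121
            have h21_218 : c 21 = false := edge_prop (he 6 21 (by decide)) h6_217
            exact trip0 (ht 13 21 22 (by decide) (by decide) (by decide)) h13_128 h21_218 h22_213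
        · -- c 23 = false
          have h40_219 : c 40 = true := trip3 (ht 0 23 40 (by decide) (by decide) (by decide)) h0_0 h23_191
          have h24_220 : c 24 = false := edge_prop' (he 24 40 (by decide)) h40_219
          have h25_221 : c 25 = false := edge_prop' (he 25 40 (by decide)) h40_219
          have h26_222 : c 26 = false := edge_prop' (he 26 40 (by decide)) h40_219
          have h27_223 : c 27 = false := edge_prop' (he 27 40 (by decide)) h40_219
          have h30_224 : c 30 = true := trip3 (ht 9 25 30 (by decide) (by decide) (by decide)) h9_122 h25_221
          have h5_225 : c 5 = false := edge_prop' (he 5 30 (by decide)) h30_224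
          have h35_226 : c 35 = false := edge_prop (he 30 35 (by decide)) h30_224
          have h28_227 : c 28 = true := trip2 (ht 0 28 35 (by decide) (by decide) (by decide)) h0_0 h35_226
          have h36_228 : c 36 = false := edge_prop (he 28 36 (by decide)) h28_227
          have h37_229 : c 37 = false := edge_prop (he 28 37 (by decide)) h28_227
          have h38_230 : c 38 = false := edge_prop (he 28 38 (by decide)) h28_227
          have h39_231 : c 39 = false := edge_prop (he 28 39 (by decide)) h28_227
          have h6_232 : c 6 = true := trip2 (ht 5 6 8 (by decide) (by decide) (by decide)) h5_225 h8_121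
          have h21_233 : c 21 = false := edge_prop (he 6 21 (by decide)) h6_232
          have h43_234 : c 43 = false := edge_prop (he 6 43 (by decide)) h6_232
          have h29_235 : c 29 = true := trip3 (ht 10 24 29 (by decide) (by decide) (by decide)) h10_123 h24_220
          have h4_236 : c 4 = false := edge_prop' (he 4 29 (by decide)) h29_235
          have h7_237 : c 7 = true := trip2 (ht 4 7 8 (by decide) (by decide) (by decide)) h4_236 h8_121
          have h22_238 : c 22 = false := edge_prop (he 7 22 (by decide)) h7_237
          exact trip0 (ht 13 21 22 (by decide) (by decide) (by decide)) h13_128 h21_233 h22_238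
    · -- c 1 = false
      have h8_239 : c 8 = true := trip3 (ht 0 1 8 (by decide) (by decide) (by decide)) h0_0 h1_120
      have h2_240 : c 2 = false := edge_prop' (he 2 8 (by decide)) h8_239
      have h3_241 : c 3 = false := edge_prop' (he 3 8 (by decide)) h8_239
      have h4_242 : c 4 = false := edge_prop' (he 4 8 (by decide)) h8_239
      have h5_243 : c 5 = false := edge_prop' (he 5 8 (by decide)) h8_239
      have h6_244 : c 6 = false := edge_prop' (he 6 8 (by decide)) h8_239
      have h7_245 : c 7 = false := edge_prop' (he 7 8 (by decide)) h8_239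
      rcases Bool.eq_false_or_eq_true (c 13) with h13_246 | h13_246
      · -- c 13 = true
        have h18_247 : c 18 = false := edge_prop (he 13 18 (by decide)) h13_246
        have h19_248 : c 19 = false := edge_prop (he 13 19 (by decide)) h13_246
        have h20_249 : c 20 = false := edge_prop (he 13 20 (by decide)) h13_246
        have h21_250 : c 21 = false := edge_prop (he 13 21 (by decide)) h13_246
        have h22_251 : c 22 = false := edge_prop (he 13 22 (by decide)) h13_246
        have h47_252 : c 47 = false := edge_prop (he 13 47 (by decide)) h13_246
        have h48_253 : c 48 = false := edge_prop (he 13 48 (by decide)) h13_246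
        rcases Bool.eq_false_or_eq_true (c 23) with h23_254 | h23_254
        · -- c 23 = true
          have h40_255 : c 40 = false := edge_prop (he 23 40 (by decide)) h23_254
          have h41_256 : c 41 = false := edge_prop (he 23 41 (by decide)) h23_254
          have h42_257 : c 42 = false := edge_prop (he 23 42 (by decide)) h23_254
          have h43_258 : c 43 = false := edge_prop (he 23 43 (by decide)) h23_254
          have h44_259 : c 44 = false := edge_prop (he 23 44 (by decide)) h23_254
          have h37_260 : c 37 = true := trip2 (ht 2 37 41 (by decide) (by decide) (by decide)) h2_240 h41_256
          have h11_261 : c 11 = false := edge_prop' (he 11 37 (by decide)) h37_260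
          have h28_262 : c 28 = false := edge_prop' (he 28 37 (by decide)) h37_260
          have h35_263 : c 35 = true := trip3 (ht 0 28 35 (by decide) (by decide) (by decide)) h0_0 h28_262
          have h29_264 : c 29 = false := edge_prop' (he 29 35 (by decide)) h35_263
          have h30_265 : c 30 = false := edge_prop' (he 30 35 (by decide)) h35_263
          have h31_266 : c 31 = false := edge_prop' (he 31 35 (by decide)) h35_263
          have h32_267 : c 32 = false := edge_prop' (he 32 35 (by decide)) h35_263
          have h34_268 : c 34 = true := trip3 (ht 1 11 34 (by decide) (by decide) (by decide)) h1_120 h11_261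
          have h16_269 : c 16 = false := edge_prop' (he 16 34 (by decide)) h34_268
          have h26_270 : c 26 = false := edge_prop' (he 26 34 (by decide)) h34_268
          have h36_271 : c 36 = true := trip2 (ht 3 36 42 (by decide) (by decide) (by decide)) h3_241 h42_257
          have h12_272 : c 12 = false := edge_prop' (he 12 36 (by decide)) h36_271
          have h33_273 : c 33 = true := trip3 (ht 1 12 33 (by decide) (by decide) (by decide)) h1_120 h12_272
          have h17_274 : c 17 = false := edge_prop' (he 17 33 (by decide)) h33_273
          exact trip0 (ht 16 17 18 (by decide) (by decide) (by decide)) h16_269 h17_274 h18_247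
        · -- c 23 = false
          have h40_275 : c 40 = true := trip3 (ht 0 23 40 (by decide) (by decide) (by decide)) h0_0 h23_254
          have h24_276 : c 24 = false := edge_prop' (he 24 40 (by decide)) h40_275
          have h25_277 : c 25 = false := edge_prop' (he 25 40 (by decide)) h40_275
          have h26_278 : c 26 = false := edge_prop' (he 26 40 (by decide)) h40_275
          have h27_279 : c 27 = false := edge_prop' (he 27 40 (by decide)) h40_275
          rcases Bool.eq_false_or_eq_true (c 28) with h28_280 | h28_280
          · -- c 28 = true
            have h35_281 : c 35 = false := edge_prop (he 28 35 (by decide)) h28_280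
            have h36_282 : c 36 = false := edge_prop (he 28 36 (by decide)) h28_280
            have h37_283 : c 37 = false := edge_prop (he 28 37 (by decide)) h28_280
            have h38_284 : c 38 = false := edge_prop (he 28 38 (by decide)) h28_280
            have h39_285 : c 39 = false := edge_prop (he 28 39 (by decide)) h28_280
            have h41_286 : c 41 = true := trip3 (ht 2 37 41 (by decide) (by decide) (by decide)) h2_240 h37_283
            have h12_287 : c 12 = false := edge_prop' (he 12 41 (by decide)) h41_286
            have h33_288 : c 33 = true := trip3 (ht 1 12 33 (by decide) (by decide) (by decide)) h1_120 h12_287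
            have h17_289 : c 17 = false := edge_prop' (he 17 33 (by decide)) h33_288
            have h32_290 : c 32 = false := edge_prop' (he 32 33 (by decide)) h33_288
            have h42_291 : c 42 = true := trip3 (ht 3 36 42 (by decide) (by decide) (by decide)) h3_241 h36_282
            have h11_292 : c 11 = false := edge_prop' (he 11 42 (by decide)) h42_291
            have h34_293 : c 34 = true := trip3 (ht 1 11 34 (by decide) (by decide) (by decide)) h1_120 h11_292
            have h16_294 : c 16 = false := edge_prop' (he 16 34 (by decide)) h34_293
            exact trip0 (ht 16 17 18 (by decide) (by decide) (by decide)) h16_294 h17_289 h18_247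
          · -- c 28 = false
            have h35_295 : c 35 = true := trip3 (ht 0 28 35 (by decide) (by decide) (by decide)) h0_0 h28_280
            have h29_296 : c 29 = false := edge_prop' (he 29 35 (by decide)) h35_295
            have h30_297 : c 30 = false := edge_prop' (he 30 35 (by decide)) h35_295
            have h31_298 : c 31 = false := edge_prop' (he 31 35 (by decide)) h35_295
            have h32_299 : c 32 = false := edge_prop' (he 32 35 (by decide)) h35_295
            have h9_300 : c 9 = true := trip1 (ht 9 25 30 (by decide) (by decide) (by decide)) h25_277 h30_297
            have h10_301 : c 10 = false := edge_prop (he 9 10 (by decide)) h9_300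
            exact trip0 (ht 10 24 29 (by decide) (by decide) (by decide)) h10_301 h24_276 h29_296
      · -- c 13 = false
        have h18_302 : c 18 = true := trip3 (ht 0 13 18 (by decide) (by decide) (by decide)) h0_0 h13_246
        have h14_303 : c 14 = false := edge_prop' (he 14 18 (by decide)) h18_302
        have h15_304 : c 15 = false := edge_prop' (he 15 18 (by decide)) h18_302
        have h16_305 : c 16 = false := edge_prop' (he 16 18 (by decide)) h18_302
        have h17_306 : c 17 = false := edge_prop' (he 17 18 (by decide)) h18_302
        have h45_307 : c 45 = false := edge_prop (he 18 45 (by decide)) h18_302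
        have h46_308 : c 46 = false := edge_prop (he 18 46 (by decide)) h18_302
        rcases Bool.eq_false_or_eq_true (c 23) with h23_309 | h23_309
        · -- c 23 = true
          have h40_310 : c 40 = false := edge_prop (he 23 40 (by decide)) h23_309
          have h41_311 : c 41 = false := edge_prop (he 23 41 (by decide)) h23_309
          have h42_312 : c 42 = false := edge_prop (he 23 42 (by decide)) h23_309
          have h43_313 : c 43 = false := edge_prop (he 23 43 (by decide)) h23_309
          have h44_314 : c 44 = false := edge_prop (he 23 44 (by decide)) h23_309
          have h37_315 : c 37 = true := trip2 (ht 2 37 41 (by decide) (by decide) (by decide)) h2_240 h41_311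
          have h11_316 : c 11 = false := edge_prop' (he 11 37 (by decide)) h37_315
          have h28_317 : c 28 = false := edge_prop' (he 28 37 (by decide)) h37_315
          have h35_318 : c 35 = true := trip3 (ht 0 28 35 (by decide) (by decide) (by decide)) h0_0 h28_317
          have h29_319 : c 29 = false := edge_prop' (he 29 35 (by decide)) h35_318
          have h30_320 : c 30 = false := edge_prop' (he 30 35 (by decide)) h35_318
          have h31_321 : c 31 = false := edge_prop' (he 31 35 (by decide)) h35_318
          have h32_322 : c 32 = false := edge_prop' (he 32 35 (by decide)) h35_318
          have h34_323 : c 34 = true := trip3 (ht 1 11 34 (by decide) (by decide) (by decide)) h1_120 h11_316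
          have h21_324 : c 21 = false := edge_prop' (he 21 34 (by decide)) h34_323
          have h26_325 : c 26 = false := edge_prop' (he 26 34 (by decide)) h34_323
          have h36_326 : c 36 = true := trip2 (ht 3 36 42 (by decide) (by decide) (by decide)) h3_241 h42_312
          have h12_327 : c 12 = false := edge_prop' (he 12 36 (by decide)) h36_326
          have h33_328 : c 33 = true := trip3 (ht 1 12 33 (by decide) (by decide) (by decide)) h1_120 h12_327
          have h22_329 : c 22 = false := edge_prop' (he 22 33 (by decide)) h33_328
          exact trip0 (ht 13 21 22 (by decide) (by decide) (by decide)) h13_246 h21_324 h22_329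
        · -- c 23 = false
          have h40_330 : c 40 = true := trip3 (ht 0 23 40 (by decide) (by decide) (by decide)) h0_0 h23_309
          have h24_331 : c 24 = false := edge_prop' (he 24 40 (by decide)) h40_330
          have h25_332 : c 25 = false := edge_prop' (he 25 40 (by decide)) h40_330
          have h26_333 : c 26 = false := edge_prop' (he 26 40 (by decide)) h40_330
          have h27_334 : c 27 = false := edge_prop' (he 27 40 (by decide)) h40_330
          rcases Bool.eq_false_or_eq_true (c 28) with h28_335 | h28_335
          · -- c 28 = true
            have h35_336 : c 35 = false := edge_prop (he 28 35 (by decide)) h28_335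
            have h36_337 : c 36 = false := edge_prop (he 28 36 (by decide)) h28_335
            have h37_338 : c 37 = false := edge_prop (he 28 37 (by decide)) h28_335
            have h38_339 : c 38 = false := edge_prop (he 28 38 (by decide)) h28_335
            have h39_340 : c 39 = false := edge_prop (he 28 39 (by decide)) h28_335
            have h41_341 : c 41 = true := trip3 (ht 2 37 41 (by decide) (by decide) (by decide)) h2_240 h37_338
            have h12_342 : c 12 = false := edge_prop' (he 12 41 (by decide)) h41_341
            have h33_343 : c 33 = true := trip3 (ht 1 12 33 (by decide) (by decide) (by decide)) h1_120 h12_342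
            have h22_344 : c 22 = false := edge_prop' (he 22 33 (by decide)) h33_343
            have h32_345 : c 32 = false := edge_prop' (he 32 33 (by decide)) h33_343
            have h42_346 : c 42 = true := trip3 (ht 3 36 42 (by decide) (by decide) (by decide)) h3_241 h36_337
            have h11_347 : c 11 = false := edge_prop' (he 11 42 (by decide)) h42_346
            have h34_348 : c 34 = true := trip3 (ht 1 11 34 (by decide) (by decide) (by decide)) h1_120 h11_347
            have h21_349 : c 21 = false := edge_prop' (he 21 34 (by decide)) h34_348
            exact trip0 (ht 13 21 22 (by decide) (by decide) (by decide)) h13_246 h21_349 h22_344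
          · -- c 28 = false
            have h35_350 : c 35 = true := trip3 (ht 0 28 35 (by decide) (by decide) (by decide)) h0_0 h28_335
            have h29_351 : c 29 = false := edge_prop' (he 29 35 (by decide)) h35_350
            have h30_352 : c 30 = false := edge_prop' (he 30 35 (by decide)) h35_350
            have h31_353 : c 31 = false := edge_prop' (he 31 35 (by decide)) h35_350
            have h32_354 : c 32 = false := edge_prop' (he 32 35 (by decide)) h35_350
            have h9_355 : c 9 = true := trip1 (ht 9 25 30 (by decide) (by decide) (by decide)) h25_332 h30_352
            have h10_356 : c 10 = false := edge_prop (he 9 10 (by decide)) h9_355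
            exact trip0 (ht 10 24 29 (by decide) (by decide) (by decide)) h10_356 h24_331 h29_351


lemma zdot_self_ne : ∀ idx : Fin 49, zdot (kscoord idx) (kscoord idx) ≠ 0 := by decide

-- ===== assembling the two cases =====

lemma orth_of_closure {X Y : Submodule ℂ H} (h : X ≤ Yᗮ) :
    X.topologicalClosure ≤ (Y.topologicalClosure)ᗮ := by
  have h1 : (Y.topologicalClosure)ᗮ = Yᗮ := by
    rw [← Submodule.orthogonal_orthogonal_eq_closure, triorth]
  rw [h1]
  exact Submodule.topologicalClosure_minimal X h (Submodule.isClosed_orthogonal _)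

lemma inner_kvec_disjoint {ι : Type*} {U : ι → H} (hU : Orthonormal ℂ U) {f g : Fin 3 → ι}
    (hfg : ∀ a b : Fin 3, f a ≠ g b) (r s : Fin 3 → ℤ × ℤ) :
    ⟪kvec (U ∘ f) r, kvec (U ∘ g) s⟫ = 0 := by
  classical
  have hz : ∀ a b : Fin 3, ⟪U (f a), U (g b)⟫ = 0 := by
    intro a b
    rw [orthonormal_iff_ite.mp hU]
    simp [hfg a b]
  rw [kvec, kvec]
  rw [sum_inner]
  refine Finset.sum_eq_zero fun a _ => ?_
  rw [inner_sum]
  refine Finset.sum_eq_zero fun b _ => ?_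
  rw [Function.comp_apply, Function.comp_apply, inner_smul_left, inner_smul_right, hz a b]
  ring

section Val4

variable (v : ∀ W : Set (ClosedSubspace H), IsBoolSub W → ClosedSubspace H → Bool)
  (hhom : ∀ (W : Set (ClosedSubspace H)) (hW : IsBoolSub W), IsHomOn W (v W hW))
  (hagree : ∀ (W₁ W₂ : Set (ClosedSubspace H)) (h₁ : IsBoolSub W₁)
        (h₂ : IsBoolSub W₂) (x : ClosedSubspace H),
        x ∈ W₁ → x ∈ W₂ → v W₁ h₁ x = v W₂ h₂ x)

include hhom hagree in
lemma finite_case [FiniteDimensional ℂ H] (hdim : 3 ≤ Module.finrank ℂ H) : False := by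
  obtain ⟨w, hw, hw0, hMf⟩ := exists_true_triple_space v hhom hagree hdim
  have hle : ∀ r : Fin 3 → ℤ × ℤ, span ℂ {kvec w r} ≤ span ℂ (range w) :=
    fun r => span_le.mpr (Set.singleton_subset_iff.mpr (kvec_mem w r))
  apply ks_core (fun idx => gval v ⟨span ℂ {kvec w (kscoord idx)}, span_singleton_closed _⟩)
  · intro i j hzd
    exact g_pair v hhom hagree _ _ (kvec_span_orth hw hzd)
  · intro i j k h1 h2 h3
    exact g_triple_rel v hhom hagree _ _ _ (Submodule.isClosed_orthogonal _)
      (kvec_span_orth hw h1) (kvec_span_orth hw h2)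
      ((hle _).trans (Submodule.le_orthogonal_orthogonal _))
      (kvec_span_orth hw h3)
      ((hle _).trans (Submodule.le_orthogonal_orthogonal _))
      ((hle _).trans (Submodule.le_orthogonal_orthogonal _))
      (dense_with_rest (span_triple_eq hw h1 h2 h3
        (zdot_self_ne i) (zdot_self_ne j) (zdot_self_ne k)))
      hMf

include hhom hagree in
lemma infinite_case (hnf : ¬ FiniteDimensional ℂ H) : False := by
  classical
  obtain ⟨wset, bH, hb⟩ := exists_hilbertBasis ℂ H
  have hval : Orthonormal ℂ (Subtype.val : wset → H) := hb ▸ bH.orthonormal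
  have hdense0 : (span ℂ (range (Subtype.val : wset → H))).topologicalClosure = ⊤ := by
    have hd := bH.dense_span
    rw [hb] at hd
    exact hd
  have hinf : Infinite wset := by
    by_contra hfin
    haveI : Finite wset := not_infinite_iff_finite.mp hfin
    apply hnf
    haveI hfd : FiniteDimensional ℂ (span ℂ (range (Subtype.val : wset → H))) :=
      FiniteDimensional.span_of_finite ℂ (Set.finite_range _)
    have hcl : IsClosed ((span ℂ (range (Subtype.val : wset → H)) : Submodule ℂ H) : Set H) :=
      Submodule.closed_of_finiteDimensional _
    have htop : span ℂ (range (Subtype.val : wset → H)) = ⊤ := by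
      rw [← hdense0]
      exact le_antisymm (Submodule.le_topologicalClosure _)
        (Submodule.topologicalClosure_minimal
          (span ℂ (range (Subtype.val : wset → H))) le_rfl hcl)
    rw [htop] at hfd
    exact Submodule.topEquiv.finiteDimensional
  have hcard : Cardinal.mk (wset × Fin 3) = Cardinal.mk wset := by
    have ha : Cardinal.aleph0 ≤ Cardinal.mk wset := Cardinal.infinite_iff.mp hinf
    have h1 : Cardinal.mk (wset × Fin 3) = Cardinal.mk wset * 3 := by
      simp [Cardinal.mk_prod, Cardinal.mk_fintype]
    have h3 : (3 : Cardinal) ≤ Cardinal.mk wset := by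
      refine le_trans ?_ ha
      exact_mod_cast (Cardinal.nat_lt_aleph0 3).le
    rw [h1]
    exact Cardinal.mul_eq_left ha h3 (by norm_num)
  obtain ⟨e⟩ := Cardinal.eq.mp hcard
  set U : wset × Fin 3 → H := fun p => ((e p : wset) : H) with hUdef
  have hU : Orthonormal ℂ U := hval.comp e e.injective
  set wfun : wset → Fin 3 → H := fun i k => U (i, k) with hwfdef
  have hwfun : ∀ i : wset, Orthonormal ℂ (wfun i) := by
    intro i
    exact hU.comp (fun k => (i, k)) (fun a b hab => by simpa using hab)
  set SP : (Fin 3 → ℤ × ℤ) → Submodule ℂ H :=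
    fun r => span ℂ (range fun i : wset => kvec (wfun i) r) with hSPdef
  set S : (Fin 3 → ℤ × ℤ) → Submodule ℂ H := fun r => (SP r).topologicalClosure with hSdef
  have hSclosed : ∀ r, IsClosed ((S r : Submodule ℂ H) : Set H) :=
    fun r => Submodule.isClosed_topologicalClosure _
  -- orthogonality
  have hSP_orth : ∀ {r s : Fin 3 → ℤ × ℤ}, zdot r s = 0 → SP r ≤ (SP s)ᗮ := by
    intro r s hrs
    refine Submodule.isOrtho_iff_le.mp ?_
    rw [Submodule.isOrtho_span]
    rintro x ⟨i, rfl⟩ y ⟨j, rfl⟩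
    rcases eq_or_ne i j with rfl | hij
    · rw [inner_kvec (hwfun i), hrs, ev_zero]; simp
    · exact inner_kvec_disjoint hU (f := fun k => (i, k)) (g := fun k => (j, k))
        (fun a b => by simp [hij]) r s
  have hS_orth : ∀ {r s : Fin 3 → ℤ × ℤ}, zdot r s = 0 → S r ≤ (S s)ᗮ :=
    fun {r s} hrs => orth_of_closure (hSP_orth hrs)
  -- density
  have hS_dense : ∀ {r1 r2 r3 : Fin 3 → ℤ × ℤ}, zdot r1 r2 = 0 → zdot r1 r3 = 0 →
      zdot r2 r3 = 0 → zdot r1 r1 ≠ 0 → zdot r2 r2 ≠ 0 → zdot r3 r3 ≠ 0 →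
      ((S r1 ⊔ (S r2 ⊔ S r3))ᗮ : Submodule ℂ H) = ⊥ := by
    intro r1 r2 r3 h12 h13 h23 hs1 hs2 hs3
    have hsub : span ℂ (range (Subtype.val : wset → H)) ≤ S r1 ⊔ (S r2 ⊔ S r3) := by
      rw [span_le]
      rintro x ⟨i0, rfl⟩
      have hx : (i0 : H) = wfun (e.symm i0).1 (e.symm i0).2 := by
        show (i0 : H) = U ((e.symm i0).1, (e.symm i0).2)
        rw [hUdef]
        simp
      have hmem3 : wfun (e.symm i0).1 (e.symm i0).2 ∈
          span ℂ {kvec (wfun (e.symm i0).1) r1} ⊔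
            (span ℂ {kvec (wfun (e.symm i0).1) r2} ⊔ span ℂ {kvec (wfun (e.symm i0).1) r3}) := by
        rw [span_triple_eq (hwfun _) h12 h13 h23 hs1 hs2 hs3]
        exact subset_span ⟨(e.symm i0).2, rfl⟩
      have hcomp : ∀ r : Fin 3 → ℤ × ℤ,
          span ℂ {kvec (wfun (e.symm i0).1) r} ≤ S r := fun r =>
        span_le.mpr (Set.singleton_subset_iff.mpr
          ((Submodule.le_topologicalClosure _) (subset_span ⟨(e.symm i0).1, rfl⟩)))
      have hsup : span ℂ {kvec (wfun (e.symm i0).1) r1} ⊔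
          (span ℂ {kvec (wfun (e.symm i0).1) r2} ⊔ span ℂ {kvec (wfun (e.symm i0).1) r3}) ≤
          S r1 ⊔ (S r2 ⊔ S r3) :=
        sup_le_sup (hcomp r1) (sup_le_sup (hcomp r2) (hcomp r3))
      rw [show ((i0 : wset) : H) = wfun (e.symm i0).1 (e.symm i0).2 from hx]
      exact hsup hmem3
    have hvb : ((span ℂ (range (Subtype.val : wset → H)))ᗮ : Submodule ℂ H) = ⊥ := by
      have h1 : ((span ℂ (range (Subtype.val : wset → H))).topologicalClosure)ᗮ =
          (span ℂ (range (Subtype.val : wset → H)))ᗮ := by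
        rw [← Submodule.orthogonal_orthogonal_eq_closure, triorth]
      rw [← h1, hdense0, Submodule.top_orthogonal_eq_bot]
    exact le_bot_iff.mp (hvb ▸ Submodule.orthogonal_le hsub)
  -- the coloring
  apply ks_core (fun idx => gval v ⟨S (kscoord idx), hSclosed _⟩)
  · intro i j hzd
    exact g_pair v hhom hagree _ _ (hS_orth hzd)
  · intro i j k h1 h2 h3
    exact g_triple v hhom hagree _ _ _ (hS_orth h1) (hS_orth h2) (hS_orth h3)
      (hS_dense h1 h2 h3 (zdot_self_ne i) (zdot_self_ne j) (zdot_self_ne k))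

end Val4

end KS

/-- Kochen–Specker in algebraic terms: if `dim H ≥ 3` there is no global
valuation on the lattice of closed subspaces of `H`, i.e. no family of Boolean
homomorphisms, one for each Boolean subalgebra, agreeing on overlaps. -/
theorem stmt_13 (hdim : 3 ≤ Module.rank ℂ H) :
    ¬ ∃ v : ∀ W : Set (ClosedSubspace H), IsBoolSub W → ClosedSubspace H → Bool,
      (∀ (W : Set (ClosedSubspace H)) (hW : IsBoolSub W), IsHomOn W (v W hW)) ∧
      (∀ (W₁ W₂ : Set (ClosedSubspace H)) (h₁ : IsBoolSub W₁)
        (h₂ : IsBoolSub W₂) (x : ClosedSubspace H),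
        x ∈ W₁ → x ∈ W₂ → v W₁ h₁ x = v W₂ h₂ x) := by
  rintro ⟨v, hhom, hagree⟩
  by_cases hfd : FiniteDimensional ℂ H
  · refine KS.finite_case v hhom hagree ?_
    have h1 : ((Module.finrank ℂ H : ℕ) : Cardinal) = Module.rank ℂ H :=
      Module.finrank_eq_rank ℂ H
    rw [← h1] at hdim
    exact_mod_cast hdim
  · exact KS.infinite_case v hhom hagree hfd
end
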